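/- arXiv:2003.02019 — 5 statements merged into one kernel-verified Lean document; each statement's English description precedes it below -/
import Mathlib

section
/- Let f : 𝔻 → 𝔻 be holomorphic and suppose there is a sequence (z_n) in 𝔻 with |z_n| → 1 such that f^h(z_n) = 1 + o((1-|z_n|)²) as n → ∞ (i.e. (f^h(z_n) - 1)/(1-|z_n|)² → 0). Then f ∈ Aut(𝔻). -/
open Complex Filter MeasureTheory Metric Set Topology

noncomputable section

/-- The open unit disk in `ℂ`. -/
def unitDisk : Set ℂ := {z : ℂ | ‖z‖ < 1}

/-- The Laplacian of a real-valued function on `ℂ ≅ ℝ²`. -/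
def lap (u : ℂ → ℝ) (z : ℂ) : ℝ :=
  fderiv ℝ (fun w => fderiv ℝ u w 1) z 1 +
  fderiv ℝ (fun w => fderiv ℝ u w Complex.I) z Complex.I

/-- The Gauss curvature `κ_λ = -Δ(log λ)/λ²` of a conformal pseudometric `λ(z)|dz|`. -/
def curv (lam : ℂ → ℝ) (z : ℂ) : ℝ :=
  -(lap (fun w => Real.log (lam w)) z) / (lam z) ^ 2

/-- A conformal pseudometric on the unit disk: continuous, nonnegative, and C² where positive. -/
structure IsConfPseudometric (lam : ℂ → ℝ) : Prop where
  cont : ContinuousOn lam unitDisk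
  nonneg : ∀ z ∈ unitDisk, 0 ≤ lam z
  smooth : ContDiffOn ℝ 2 lam {z : ℂ | z ∈ unitDisk ∧ 0 < lam z}

/-- The hyperbolic distortion `f^h(z) = (1-|z|²)|f'(z)|/(1-|f(z)|²)`. -/
def fh (f : ℂ → ℂ) (z : ℂ) : ℝ :=
  (1 - ‖z‖ ^ 2) * ‖deriv f z‖ / (1 - ‖f z‖ ^ 2)

/-- `f` is a holomorphic automorphism of the unit disk. -/
def IsDiskAutomorphism (f : ℂ → ℂ) : Prop :=
  DifferentiableOn ℂ f unitDisk ∧ Set.BijOn f unitDisk unitDisk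

def mob (a z : ℂ) : ℂ := (z - a) / (1 - (starRingEnd ℂ) a * z)

lemma normSq_lt_one {a : ℂ} (ha : ‖a‖ < 1) : Complex.normSq a < 1 := by
  rw [← Complex.sq_norm]; nlinarith [norm_nonneg a]

lemma mob_denom_ne {a z : ℂ} (ha : ‖a‖ < 1) (hz : ‖z‖ < 1) :
    1 - (starRingEnd ℂ) a * z ≠ 0 := by
  intro h
  have h1 : (1 : ℂ) = (starRingEnd ℂ) a * z := by linear_combination h
  have : ‖(starRingEnd ℂ) a * z‖ < 1 := by
    rw [norm_mul, Complex.norm_conj]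
    nlinarith [norm_nonneg a, norm_nonneg z]
  rw [← h1] at this; simp at this

lemma normSq_mob_identity (a z : ℂ) :
    Complex.normSq (1 - (starRingEnd ℂ) a * z) - Complex.normSq (z - a)
      = (1 - Complex.normSq a) * (1 - Complex.normSq z) := by
  simp only [Complex.normSq_apply, Complex.sub_re, Complex.sub_im, Complex.mul_re, Complex.mul_im,
    Complex.one_re, Complex.one_im, Complex.conj_re, Complex.conj_im]
  ring

lemma mob_mem {a z : ℂ} (ha : ‖a‖ < 1) (hz : ‖z‖ < 1) :
    ‖mob a z‖ < 1 := by
  have hd := mob_denom_ne ha hz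
  have hpos : 0 < Complex.normSq (1 - (starRingEnd ℂ) a * z) := Complex.normSq_pos.2 hd
  have key : Complex.normSq (mob a z) < 1 := by
    rw [mob, map_div₀, div_lt_one hpos]
    nlinarith [normSq_mob_identity a z, normSq_lt_one ha, normSq_lt_one hz]
  rw [Complex.norm_def, show (1:ℝ) = Real.sqrt 1 by simp]
  exact Real.sqrt_lt_sqrt (Complex.normSq_nonneg _) key

lemma one_sub_conj_mul_self_ne {a : ℂ} (ha : ‖a‖ < 1) :
    1 - (starRingEnd ℂ) a * a ≠ 0 := mob_denom_ne ha ha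

lemma mob_inv {a z : ℂ} (ha : ‖a‖ < 1) (hz : ‖z‖ < 1) :
    mob (-a) (mob a z) = z := by
  have h1 : 1 - (starRingEnd ℂ) a * z ≠ 0 := mob_denom_ne ha hz
  have h2 : 1 - (starRingEnd ℂ) a * a ≠ 0 := one_sub_conj_mul_self_ne ha
  have hd2 : 1 - (starRingEnd ℂ) (-a) * mob a z
      = (1 - (starRingEnd ℂ) a * a) / (1 - (starRingEnd ℂ) a * z) := by
    rw [mob, map_neg]
    field_simp
    ring
  rw [mob, hd2, div_eq_iff (div_ne_zero h2 h1), mob]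
  have h1' : 1 - z * (starRingEnd ℂ) a ≠ 0 := by rwa [mul_comm]
  field_simp
  ring

lemma mob_hasDerivAt (a : ℂ) {z : ℂ} (h : 1 - (starRingEnd ℂ) a * z ≠ 0) :
    HasDerivAt (mob a) ((1 - (starRingEnd ℂ) a * a) / (1 - (starRingEnd ℂ) a * z) ^ 2) z := by
  have hu : HasDerivAt (fun w : ℂ => w - a) 1 z := (hasDerivAt_id z).sub_const a
  have hv : HasDerivAt (fun w : ℂ => 1 - (starRingEnd ℂ) a * w) (-((starRingEnd ℂ) a)) z := by
    simpa using ((hasDerivAt_id z).const_mul ((starRingEnd ℂ) a)).const_sub (1:ℂ)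
  have := hu.div hv h
  refine HasDerivAt.congr_deriv this ?_
  field_simp
  ring

lemma mob_abs_symm (a b : ℂ) : ‖mob a b‖ = ‖mob b a‖ := by
  rw [mob, mob, norm_div, norm_div]
  congr 1
  · exact norm_sub_rev b a
  · rw [show 1 - (starRingEnd ℂ) b * a = (starRingEnd ℂ) (1 - (starRingEnd ℂ) a * b) by
      simp [map_sub, map_mul]; ring, Complex.norm_conj]

lemma mem_ball_iff_abs {z : ℂ} : z ∈ ball (0:ℂ) 1 ↔ ‖z‖ < 1 := by
  simp [mem_ball_zero_iff]

lemma mob_self (a : ℂ) : mob a a = 0 := by simp [mob]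

lemma mob_neg_zero (w : ℂ) : mob (-w) 0 = w := by simp [mob]

/-- Schwarz–Pick at the origin. -/
lemma SP0 {g : ℂ → ℂ} (hd : DifferentiableOn ℂ g (ball 0 1))
    (hm : MapsTo g (ball 0 1) (ball 0 1)) {ζ : ℂ} (hζ : ζ ∈ ball (0:ℂ) 1) :
    ‖mob (g 0) (g ζ)‖ ≤ ‖ζ‖ := by
  have h00 : (0:ℂ) ∈ ball (0:ℂ) 1 := by simp
  have hg0 : ‖g 0‖ < 1 := mem_ball_iff_abs.1 (hm h00)
  set h : ℂ → ℂ := fun z => mob (g 0) (g z) with hh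
  have hd' : DifferentiableOn ℂ h (ball 0 1) := fun z hz =>
    ((mob_hasDerivAt (g 0) (mob_denom_ne hg0 (mem_ball_iff_abs.1 (hm hz)))).differentiableAt).comp_differentiableWithinAt
      z (hd z hz)
  have h0 : h 0 = 0 := mob_self (g 0)
  have hm' : MapsTo h (ball 0 1) (ball (h 0) 1) := by
    rw [h0]
    exact fun z hz => mem_ball_iff_abs.2 (mob_mem hg0 (mem_ball_iff_abs.1 (hm hz)))
  have := Complex.dist_le_div_mul_dist_of_mapsTo_ball hd' (hm'.mono_right ball_subset_closedBall) hζ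
  simpa [h0, Complex.dist_eq] using this

def Gm (f : ℂ → ℂ) (w : ℂ) : ℂ → ℂ := fun ζ => mob (f w) (f (mob (-w) ζ))

lemma Gm_zero (f : ℂ → ℂ) (w : ℂ) : Gm f w 0 = 0 := by
  rw [Gm, mob_neg_zero, mob_self]

lemma Gm_diffOn {f : ℂ → ℂ} (hf : DifferentiableOn ℂ f (ball 0 1))
    (hmaps : MapsTo f (ball 0 1) (ball 0 1)) {w : ℂ} (hw : ‖w‖ < 1) :
    DifferentiableOn ℂ (Gm f w) (ball 0 1) := by
  intro ζ hζ
  have hw' : ‖-w‖ < 1 := by rwa [norm_neg]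
  have h1 : DifferentiableAt ℂ (mob (-w)) ζ :=
    (mob_hasDerivAt (-w) (mob_denom_ne hw' (mem_ball_iff_abs.1 hζ))).differentiableAt
  have hmem : mob (-w) ζ ∈ ball (0:ℂ) 1 := mem_ball_iff_abs.2 (mob_mem hw' (mem_ball_iff_abs.1 hζ))
  have h2 : DifferentiableAt ℂ f (mob (-w) ζ) := hf.differentiableAt (isOpen_ball.mem_nhds hmem)
  have hfw : ‖f (mob (-w) ζ)‖ < 1 := mem_ball_iff_abs.1 (hmaps hmem)
  have hfw2 : ‖f w‖ < 1 :=
    mem_ball_iff_abs.1 (hmaps (mem_ball_iff_abs.2 hw))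
  have h3 : DifferentiableAt ℂ (mob (f w)) (f (mob (-w) ζ)) :=
    (mob_hasDerivAt (f w) (mob_denom_ne hfw2 hfw)).differentiableAt
  exact (DifferentiableAt.comp ζ h3 (DifferentiableAt.comp ζ h2 h1)).differentiableWithinAt

lemma Gm_maps {f : ℂ → ℂ} (hmaps : MapsTo f (ball 0 1) (ball 0 1)) {w : ℂ}
    (hw : ‖w‖ < 1) : MapsTo (Gm f w) (ball 0 1) (ball 0 1) := by
  intro ζ hζ
  have hw' : ‖-w‖ < 1 := by rwa [norm_neg]
  have hmem : mob (-w) ζ ∈ ball (0:ℂ) 1 := mem_ball_iff_abs.2 (mob_mem hw' (mem_ball_iff_abs.1 hζ))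
  have hfw2 : ‖f w‖ < 1 := mem_ball_iff_abs.1 (hmaps (mem_ball_iff_abs.2 hw))
  exact mem_ball_iff_abs.2 (mob_mem hfw2 (mem_ball_iff_abs.1 (hmaps hmem)))

lemma conj_mul_self (u : ℂ) : (starRingEnd ℂ) u * u = (Complex.normSq u : ℂ) := by
  rw [mul_comm, Complex.mul_conj]

lemma Gm_hasDerivAt {f : ℂ → ℂ} (hf : DifferentiableOn ℂ f (ball 0 1))
    (hmaps : MapsTo f (ball 0 1) (ball 0 1)) {w : ℂ} (hw : ‖w‖ < 1) :
    HasDerivAt (Gm f w)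
      (deriv f w * (1 - (Complex.normSq w : ℂ)) / (1 - (Complex.normSq (f w) : ℂ))) 0 := by
  have hw' : ‖-w‖ < 1 := by rwa [norm_neg]
  have hd0 : (1 : ℂ) - (starRingEnd ℂ) (-w) * 0 ≠ 0 := by simp
  have h1 : HasDerivAt (mob (-w))
      ((1 - (starRingEnd ℂ) (-w) * (-w)) / (1 - (starRingEnd ℂ) (-w) * 0) ^ 2) 0 :=
    mob_hasDerivAt (-w) hd0
  have hwmem : w ∈ ball (0:ℂ) 1 := mem_ball_iff_abs.2 hw
  have h2 : HasDerivAt f (deriv f w) w :=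
    (hf.differentiableAt (isOpen_ball.mem_nhds hwmem)).hasDerivAt
  have hfw : ‖f w‖ < 1 := mem_ball_iff_abs.1 (hmaps hwmem)
  have h3 : HasDerivAt (mob (f w))
      ((1 - (starRingEnd ℂ) (f w) * (f w)) / (1 - (starRingEnd ℂ) (f w) * (f w)) ^ 2) (f w) :=
    mob_hasDerivAt (f w) (mob_denom_ne hfw hfw)
  have h2'' : HasDerivAt f (deriv f w) (mob (-w) 0) := by rw [mob_neg_zero]; exact h2
  have hinner := HasDerivAt.comp 0 h2'' h1
  have h3'' : HasDerivAt (mob (f w))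
      ((1 - (starRingEnd ℂ) (f w) * (f w)) / (1 - (starRingEnd ℂ) (f w) * (f w)) ^ 2)
      ((f ∘ mob (-w)) 0) := by
    show HasDerivAt _ _ (f (mob (-w) 0))
    rw [mob_neg_zero]; exact h3
  have htot := HasDerivAt.comp 0 h3'' hinner
  have htot' : HasDerivAt (Gm f w)
      ((1 - (starRingEnd ℂ) (f w) * (f w)) / (1 - (starRingEnd ℂ) (f w) * (f w)) ^ 2 *
        (deriv f w * ((1 - (starRingEnd ℂ) (-w) * (-w)) / (1 - (starRingEnd ℂ) (-w) * 0) ^ 2))) 0 := htot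
  have hnefw : (1:ℂ) - (Complex.normSq (f w) : ℂ) ≠ 0 := by
    rw [← conj_mul_self]; exact one_sub_conj_mul_self_ne hfw
  convert htot' using 1
  rw [show ((starRingEnd ℂ) (-w) * (-w)) = (starRingEnd ℂ) w * w by rw [map_neg, neg_mul_neg],
    conj_mul_self w, conj_mul_self (f w), mul_zero, sub_zero, one_pow, div_one]
  field_simp

lemma Gm_deriv_abs {f : ℂ → ℂ} (hf : DifferentiableOn ℂ f (ball 0 1))
    (hmaps : MapsTo f (ball 0 1) (ball 0 1)) {w : ℂ} (hw : ‖w‖ < 1) :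
    ‖deriv (Gm f w) 0‖ = fh f w := by
  have hfw : ‖f w‖ < 1 := mem_ball_iff_abs.1 (hmaps (mem_ball_iff_abs.2 hw))
  rw [(Gm_hasDerivAt hf hmaps hw).deriv, fh]
  rw [norm_div, norm_mul]
  rw [show (1:ℂ) - (Complex.normSq w : ℂ) = ((1 - Complex.normSq w : ℝ) : ℂ) by push_cast; ring]
  rw [show (1:ℂ) - (Complex.normSq (f w) : ℂ) = ((1 - Complex.normSq (f w) : ℝ) : ℂ) by
    push_cast; ring]
  rw [Complex.norm_real, Complex.norm_real, Real.norm_eq_abs, Real.norm_eq_abs,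
    _root_.abs_of_nonneg (by nlinarith [normSq_lt_one hw] : (0:ℝ) ≤ 1 - Complex.normSq w),
    _root_.abs_of_nonneg (by nlinarith [normSq_lt_one hfw] : (0:ℝ) ≤ 1 - Complex.normSq (f w)),
    Complex.sq_norm, Complex.sq_norm]
  ring

set_option maxHeartbeats 1000000 in
/-- From `|mob b a| ≤ r` deduce `|a| (1 + |b| r) ≤ |b| + r`. -/
lemma step {a b : ℂ} {r : ℝ} (ha : ‖a‖ < 1) (hb : ‖b‖ < 1)
    (hr : 0 ≤ r) (h : ‖mob b a‖ ≤ r) :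
    ‖a‖ * (1 + ‖b‖ * r) ≤ ‖b‖ + r := by
  set A := ‖a‖ with hA
  set B := ‖b‖ with hB
  have hA0 : 0 ≤ A := norm_nonneg a
  have hB0 : 0 ≤ B := norm_nonneg b
  have hAB : A * B ≤ A := mul_le_of_le_one_right hA0 hb.le
  rcases le_or_gt 1 r with hr1 | hr1
  · nlinarith [mul_nonneg (mul_nonneg hA0 hB0) hr,
      mul_nonneg (by linarith : (0:ℝ) ≤ 1 - A) (by linarith : (0:ℝ) ≤ 1 + B),
      mul_nonneg (by linarith : (0:ℝ) ≤ r - 1) (by linarith : (0:ℝ) ≤ 1 - A * B)]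
  -- main case r < 1
  set D := ‖1 - (starRingEnd ℂ) b * a‖ with hD
  set E := ‖a - b‖ with hE
  have hDpos : 0 < D := norm_pos_iff.2 (mob_denom_ne hb ha)
  have hE0 : 0 ≤ E := norm_nonneg _
  have hErD : E ≤ r * D := by
    have : E / D ≤ r := by
      rw [hE, hD, ← norm_div]; exact h
    calc E = E / D * D := by field_simp
    _ ≤ r * D := by exact mul_le_mul_of_nonneg_right this hDpos.le
  have hiden : D ^ 2 - E ^ 2 = (1 - B ^ 2) * (1 - A ^ 2) := by
    rw [hD, hE, Complex.sq_norm, Complex.sq_norm, hA, hB, Complex.sq_norm, Complex.sq_norm]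
    exact normSq_mob_identity b a
  have hDge : 1 - A * B ≤ D := by
    have h' := norm_sub_norm_le (1 : ℂ) ((starRingEnd ℂ) b * a)
    rw [norm_one, norm_mul, Complex.norm_conj] at h'
    calc 1 - A * B = 1 - ‖b‖ * ‖a‖ := by rw [← hA, ← hB]; ring
    _ ≤ D := h'
  have hEge : A - B ≤ E := norm_sub_norm_le a b
  have hEge' : B - A ≤ E := by
    rw [hE, norm_sub_rev]; exact norm_sub_norm_le b a
  have hABnn : 0 ≤ 1 - A * B := by linarith
  have hkey : A - B ≤ r * (1 - A * B) := by
    have h1 : E ^ 2 ≤ r ^ 2 * D ^ 2 := by nlinarith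
    have h2 : (1 - A * B) ^ 2 ≤ D ^ 2 := pow_le_pow_left₀ hABnn hDge 2
    have h2' : (1 - r ^ 2) * (1 - A * B) ^ 2 ≤ (1 - r ^ 2) * D ^ 2 :=
      mul_le_mul_of_nonneg_left h2 (by nlinarith)
    have h3 : (A - B) ^ 2 ≤ (r * (1 - A * B)) ^ 2 := by nlinarith
    have h4 : 0 ≤ r * (1 - A * B) := mul_nonneg hr hABnn
    nlinarith [sq_nonneg (A - B - r * (1 - A * B)), sq_nonneg (A - B + r * (1 - A * B))]
  nlinarith

lemma key_bound {f : ℂ → ℂ} (hf : DifferentiableOn ℂ f (ball 0 1))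
    (hmaps : MapsTo f (ball 0 1) (ball 0 1))
    (hlt : ∀ w ∈ ball (0:ℂ) 1, ∀ ζ ∈ ball (0:ℂ) 1, ‖dslope (Gm f w) 0 ζ‖ < 1)
    {w : ℂ} (hw : ‖w‖ < 1) :
    (1 - fh f 0) / 4 * (1 - ‖w‖) ^ 2 ≤ 1 - fh f w := by
  have h00 : (0:ℂ) ∈ ball (0:ℂ) 1 := by simp
  have h0lt : ‖(0:ℂ)‖ < 1 := by simp
  have hwm : w ∈ ball (0:ℂ) 1 := mem_ball_iff_abs.2 hw
  have hnwm : -w ∈ ball (0:ℂ) 1 := mem_ball_iff_abs.2 (by rwa [norm_neg])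
  set q0 : ℂ → ℂ := dslope (Gm f 0) 0 with hq0
  set qw : ℂ → ℂ := dslope (Gm f w) 0 with hqw
  set r : ℝ := ‖w‖ with hr
  have hr0 : 0 ≤ r := norm_nonneg w
  have hr1 : r < 1 := hw
  -- values at the center
  have hq00 : ‖q0 0‖ = fh f 0 := by
    rw [hq0, dslope_same]; exact Gm_deriv_abs hf hmaps h0lt
  have hqw0 : ‖qw 0‖ = fh f w := by
    rw [hqw, dslope_same]; exact Gm_deriv_abs hf hmaps hw
  -- differentiability and mapsTo of the dslope quotients
  have hd0 : DifferentiableOn ℂ q0 (ball 0 1) :=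
    (differentiableOn_dslope (ball_mem_nhds 0 one_pos)).mpr (Gm_diffOn hf hmaps h0lt)
  have hdw : DifferentiableOn ℂ qw (ball 0 1) :=
    (differentiableOn_dslope (ball_mem_nhds 0 one_pos)).mpr (Gm_diffOn hf hmaps hw)
  have hm0 : MapsTo q0 (ball 0 1) (ball 0 1) := fun ζ hζ =>
    mem_ball_iff_abs.2 (hlt 0 h00 ζ hζ)
  have hmw : MapsTo qw (ball 0 1) (ball 0 1) := fun ζ hζ =>
    mem_ball_iff_abs.2 (hlt w hwm ζ hζ)
  set b : ℝ := fh f 0 with hbdef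
  set t : ℝ := ‖q0 w‖ with htdef
  set h : ℝ := fh f w with hhdef
  have hb1 : b < 1 := by rw [← hq00]; exact hlt 0 h00 0 h00
  have hb0 : 0 ≤ b := by rw [← hq00]; exact norm_nonneg _
  have ht1 : t < 1 := hlt 0 h00 w hwm
  have ht0 : 0 ≤ t := norm_nonneg _
  have hh1 : h < 1 := by rw [← hqw0]; exact hlt w hwm 0 h00
  have hh0 : 0 ≤ h := by rw [← hqw0]; exact norm_nonneg _
  -- step 1 : t (1 + b r) ≤ b + r
  have sp1 : ‖mob (q0 0) (q0 w)‖ ≤ r := SP0 hd0 hm0 hwm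
  have step1 : t * (1 + b * r) ≤ b + r := by
    have := step (hlt 0 h00 w hwm) (hlt 0 h00 0 h00) hr0 sp1
    rwa [hq00] at this
  -- |qw (-w)| = t
  have habseq : ‖qw (-w)‖ = t := by
    rcases eq_or_ne w 0 with rfl | hw0
    · simp only [neg_zero, htdef, hqw, hq0]
    · have hWne : -w ≠ (0:ℂ) := neg_ne_zero.2 hw0
      have e1 : qw (-w) = Gm f w (-w) / (-w) := by
        rw [hqw, dslope_of_ne _ hWne, slope_def_field, Gm_zero, sub_zero, sub_zero]
      have e2 : Gm f w (-w) = mob (f w) (f 0) := by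
        rw [Gm, mob_self]
      have e3 : q0 w = Gm f 0 w / w := by
        rw [hq0, dslope_of_ne _ hw0, slope_def_field, Gm_zero, sub_zero, sub_zero]
      have e4 : Gm f 0 w = mob (f 0) (f w) := by
        rw [Gm, show mob (-(0:ℂ)) w = w by simp [mob]]
      rw [e1, e2, htdef, e3, e4, norm_div, norm_div, norm_neg,
        mob_abs_symm]
  -- step 2 : h (1 + t r) ≤ t + r
  have sp2 : ‖mob (qw (-w)) (qw 0)‖ ≤ r := by
    rw [mob_abs_symm]
    have := SP0 hdw hmw hnwm
    rwa [norm_neg] at this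
  have step2 : h * (1 + t * r) ≤ t + r := by
    have hlt2 : ‖qw (-w)‖ < 1 := by rw [habseq]; exact ht1
    have := step (hlt w hwm 0 h00) hlt2 hr0 sp2
    rwa [habseq, hqw0] at this
  -- combine
  have hbr : b * r ≤ b := mul_le_of_le_one_right hb0 hr1.le
  have htr : t * r ≤ t := mul_le_of_le_one_right ht0 hr1.le
  have e5 : (1 - b) * (1 - r) ≤ (1 - t) * 2 := by
    nlinarith [mul_nonneg (by linarith : (0:ℝ) ≤ 1 - t) (by linarith : (0:ℝ) ≤ 1 - b * r)]
  have e6 : (1 - t) * (1 - r) ≤ (1 - h) * 2 := by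
    nlinarith [mul_nonneg (by linarith : (0:ℝ) ≤ 1 - h) (by linarith : (0:ℝ) ≤ 1 - t * r)]
  nlinarith [mul_le_mul_of_nonneg_right e5 (by linarith : (0:ℝ) ≤ 1 - r)]

/-- **The strong form of the Schwarz–Pick lemma at the boundary of the unit disk.**
If `f : 𝔻 → 𝔻` is holomorphic and `f^h(z_n) = 1 + o((1-|z_n|)²)` along a sequence
`(z_n)` in `𝔻` with `|z_n| → 1`, then `f ∈ Aut(𝔻)`. -/
theorem boundary_schwarz_pick
    (f : ℂ → ℂ) (hf : DifferentiableOn ℂ f unitDisk)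
    (hmaps : Set.MapsTo f unitDisk unitDisk)
    (z : ℕ → ℂ) (hz : ∀ n, z n ∈ unitDisk)
    (hz1 : Tendsto (fun n => ‖z n‖) atTop (𝓝 1))
    (ho : Tendsto (fun n => (fh f (z n) - 1) / (1 - ‖z n‖) ^ 2)
      atTop (𝓝 0)) :
    IsDiskAutomorphism f := by
  have hball : unitDisk = ball (0:ℂ) 1 := by
    ext u; simp [unitDisk, mem_ball_zero_iff]
  rw [hball] at hf hmaps
  have hzball : ∀ n, ‖z n‖ < 1 := fun n => hz n
  by_cases hcase : ∀ w ∈ ball (0:ℂ) 1, ∀ ζ ∈ ball (0:ℂ) 1,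
      ‖dslope (Gm f w) 0 ζ‖ < 1
  · exfalso
    have h00 : (0:ℂ) ∈ ball (0:ℂ) 1 := by simp
    have hb1 : fh f 0 < 1 := by
      have h := hcase 0 h00 0 h00
      rwa [dslope_same, Gm_deriv_abs hf hmaps (by simp : ‖(0:ℂ)‖ < 1)] at h
    have hbd : ∀ n, (fh f (z n) - 1) / (1 - ‖z n‖) ^ 2 ≤ -((1 - fh f 0) / 4) := by
      intro n
      have hzn : ‖z n‖ < 1 := hzball n
      have hk := key_bound hf hmaps hcase hzn
      have hpos : (0:ℝ) < (1 - ‖z n‖) ^ 2 := pow_pos (by linarith) 2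
      rw [div_le_iff₀ hpos]
      nlinarith [hk]
    have hev : ∀ᶠ n in atTop,
        -((1 - fh f 0) / 4) < (fh f (z n) - 1) / (1 - ‖z n‖) ^ 2 :=
      ho.eventually (eventually_gt_nhds (by linarith))
    obtain ⟨n, hn⟩ := hev.exists
    exact absurd (hbd n) (not_le.2 hn)
  · push_neg at hcase
    obtain ⟨w, hwm, ζ, hζ, hge⟩ := hcase
    have hw : ‖w‖ < 1 := mem_ball_iff_abs.1 hwm
    have hfw : ‖f w‖ < 1 := mem_ball_iff_abs.1 (hmaps hwm)
    have hGd := Gm_diffOn hf hmaps hw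
    have hGm' : MapsTo (Gm f w) (ball 0 1) (ball (Gm f w 0) 1) := by
      rw [Gm_zero]; exact Gm_maps hmaps hw
    have hub := Complex.norm_dslope_le_div_of_mapsTo_ball hGd (hGm'.mono_right ball_subset_closedBall) hζ
    have heq : ‖dslope (Gm f w) 0 ζ‖ = 1 / 1 :=
      le_antisymm (by simpa using hub) (by simpa using hge)
    set l := dslope (Gm f w) 0 ζ with hl
    have hl1 : ‖l‖ = 1 := by
      have h' := heq; simpa using h'
    have hl0 : l ≠ 0 := by
      intro h0; rw [h0] at hl1; simp at hl1
    have hEq := Complex.affine_of_mapsTo_ball_of_exists_norm_dslope_eq_div hGd (hGm'.mono_right ball_subset_closedBall) hζ heq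
    have hGmEq : ∀ u ∈ ball (0:ℂ) 1, Gm f w u = u * l := by
      intro u hu
      have := hEq hu
      simpa [Gm_zero, smul_eq_mul] using this
    have hfu : ∀ u ∈ ball (0:ℂ) 1, mob (f w) (f u) = mob w u * l := by
      intro u hu
      have hu' : ‖u‖ < 1 := mem_ball_iff_abs.1 hu
      have h1 := hGmEq (mob w u) (mem_ball_iff_abs.2 (mob_mem hw hu'))
      rw [Gm, mob_inv hw hu'] at h1
      exact h1
    have hform : ∀ u ∈ ball (0:ℂ) 1, f u = mob (-(f w)) (mob w u * l) := by
      intro u hu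
      rw [← hfu u hu, mob_inv hfw (mem_ball_iff_abs.1 (hmaps hu))]
    set g : ℂ → ℂ := fun v => mob (-w) (mob (f w) v * l⁻¹) with hg
    have habsinv : ‖l⁻¹‖ = 1 := by rw [norm_inv, hl1]; norm_num
    have hx' : ∀ v, ‖v‖ < 1 → ‖mob (f w) v * l⁻¹‖ < 1 := by
      intro v hv
      rw [norm_mul, habsinv, mul_one]; exact mob_mem hfw hv
    have hgmaps : MapsTo g (ball (0:ℂ) 1) (ball (0:ℂ) 1) := by
      intro v hv
      exact mem_ball_iff_abs.2
        (mob_mem (by rwa [norm_neg]) (hx' v (mem_ball_iff_abs.1 hv)))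
    have hleft : ∀ u ∈ ball (0:ℂ) 1, g (f u) = u := by
      intro u hu
      have hu' : ‖u‖ < 1 := mem_ball_iff_abs.1 hu
      show mob (-w) (mob (f w) (f u) * l⁻¹) = u
      rw [hfu u hu, mul_assoc, mul_inv_cancel₀ hl0, mul_one, mob_inv hw hu']
    have hright : ∀ v ∈ ball (0:ℂ) 1, f (g v) = v := by
      intro v hv
      have hv' : ‖v‖ < 1 := mem_ball_iff_abs.1 hv
      have hx := hx' v hv'
      have hgv : g v ∈ ball (0:ℂ) 1 := hgmaps hv
      have hmobinv : mob w (mob (-w) (mob (f w) v * l⁻¹)) = mob (f w) v * l⁻¹ := by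
        have h2 := mob_inv (a := -w) (z := mob (f w) v * l⁻¹)
          (by rwa [norm_neg]) hx
        rwa [neg_neg] at h2
      rw [hform (g v) hgv]
      show mob (-(f w)) (mob w (mob (-w) (mob (f w) v * l⁻¹)) * l) = v
      rw [hmobinv, mul_assoc, inv_mul_cancel₀ hl0, mul_one, mob_inv hfw hv']
    have hinv : Set.InvOn g f (ball (0:ℂ) 1) (ball (0:ℂ) 1) := ⟨hleft, hright⟩
    constructor
    · rwa [hball]
    · rw [hball]; exact hinv.bijOn hmaps hgmaps
end
end

section
/- Let (f_n) be a sequence of holomorphic maps f_n : 𝔻 → 𝔻 and suppose there is a sequence (z_n) in 𝔻 with |z_n| → 1 such that f_n^h(z_n) = 1 + o((1-|z_n|)²) as n → ∞ (i.e. (f_n^h(z_n) - 1)/(1-|z_n|)² → 0). Then (a) f_n^h → 1 locally uniformly in 𝔻, and (b) every locally uniform subsequential limit of (f_n) is either an automorphism of 𝔻 or a constant of modulus 1. -/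
open Complex Filter MeasureTheory Metric Set Topology

noncomputable section

namespace SSP
open ComplexConjugate

lemma unitDisk_eq : unitDisk = Metric.ball (0:ℂ) 1 := by
  ext z; simp [unitDisk, mem_ball_zero_iff]

lemma isOpen_unitDisk : IsOpen unitDisk := unitDisk_eq ▸ isOpen_ball

/-- Möbius factor. -/
def mb (a z : ℂ) : ℂ := (z - a) / (1 - conj a * z)

lemma den_ne {a z : ℂ} (ha : norm a ≤ 1) (hz : norm z < 1) :
    1 - conj a * z ≠ 0 := by
  intro h
  have h1 : (1:ℂ) = conj a * z := by linear_combination h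
  have : norm (conj a * z) < 1 := by
    rw [norm_mul, Complex.norm_conj]
    calc norm a * norm z ≤ 1 * norm z := by
          exact mul_le_mul_of_nonneg_right ha (norm_nonneg z)
      _ < 1 := by simpa using hz
  rw [← h1] at this; simp at this

lemma sq_abs_sub (z w : ℂ) :
    norm (z - w) ^ 2 =
      norm z ^ 2 + norm w ^ 2 - 2 * (conj w * z).re := by
  rw [Complex.sq_norm, Complex.sq_norm, Complex.sq_norm]
  simp [Complex.normSq_apply, Complex.mul_re, Complex.conj_re, Complex.conj_im]
  ring

lemma sq_abs_den (z w : ℂ) :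
    norm (1 - conj w * z) ^ 2 =
      1 + norm z ^ 2 * norm w ^ 2 - 2 * (conj w * z).re := by
  rw [Complex.sq_norm, Complex.sq_norm, Complex.sq_norm]
  simp [Complex.normSq_apply, Complex.mul_re, Complex.mul_im,
    Complex.conj_re, Complex.conj_im]
  ring

lemma re_le (z w : ℂ) : |(conj w * z).re| ≤ norm z * norm w := by
  calc |(conj w * z).re| ≤ norm (conj w * z) := Complex.abs_re_le_norm _
    _ = norm z * norm w := by rw [norm_mul, Complex.norm_conj]; ring

lemma mb_mem {a z : ℂ} (ha : norm a < 1) (hz : norm z < 1) :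
    norm (mb a z) < 1 := by
  have hden := den_ne ha.le hz
  have hdenpos : 0 < norm (1 - conj a * z) := by
    simpa [norm_pos_iff] using hden
  rw [mb, norm_div, div_lt_one hdenpos]
  have h1 := sq_abs_sub z a
  have h2 := sq_abs_den z a
  have key : norm (z - a) ^ 2 < norm (1 - conj a * z) ^ 2 := by
    nlinarith [mul_pos (by nlinarith [norm_nonneg a] : (0:ℝ) < 1 - norm a ^ 2)
      (by nlinarith [norm_nonneg z] : (0:ℝ) < 1 - norm z ^ 2)]
  exact lt_of_pow_lt_pow_left₀ 2 (norm_nonneg _) key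


lemma mb_self (a : ℂ) : mb a a = 0 := by simp [mb]

lemma mb_inv {a z : ℂ} (ha : norm a < 1) (hz : norm z < 1) :
    mb (-a) (mb a z) = z := by
  have h1 : 1 - conj a * z ≠ 0 := den_ne ha.le hz
  have h2 : 1 - conj a * a ≠ 0 := den_ne ha.le ha
  have h2' : 1 - a * conj a ≠ 0 := by rwa [mul_comm] at h2
  rw [mb, mb, map_neg]
  rw [show (z - a) / (1 - conj a * z) - -a = z * (1 - a * conj a) / (1 - conj a * z) by
      rw [eq_div_iff h1, sub_mul, div_mul_cancel₀ _ h1]; ring,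
    show 1 - -conj a * ((z - a) / (1 - conj a * z)) = (1 - a * conj a) / (1 - conj a * z) by
      rw [eq_div_iff h1, sub_mul, one_mul, mul_assoc, div_mul_cancel₀ _ h1]; ring]
  rw [div_div_div_cancel_right₀ h1, mul_div_assoc, div_self h2', mul_one]

lemma mb_zero {a : ℂ} : mb (-a) 0 = a := by simp [mb]

lemma mb_diffAt {a z : ℂ} (ha : norm a ≤ 1) (hz : norm z < 1) :
    DifferentiableAt ℂ (mb a) z := by
  apply DifferentiableAt.div
  · exact (differentiable_id.sub_const a).differentiableAt
  · exact (differentiableAt_const _).sub ((differentiableAt_const _).mul differentiableAt_id)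
  · exact den_ne ha hz

lemma mb_diffOn {a : ℂ} (ha : norm a ≤ 1) :
    DifferentiableOn ℂ (mb a) unitDisk := fun z hz => (mb_diffAt ha hz).differentiableWithinAt

lemma mb_hasDeriv {a z : ℂ} (ha : norm a ≤ 1) (hz : norm z < 1) :
    HasDerivAt (mb a) ((1 - conj a * a) / (1 - conj a * z) ^ 2) z := by
  have h1 : HasDerivAt (fun w : ℂ => w - a) 1 z := (hasDerivAt_id z).sub_const a
  have h2 : HasDerivAt (fun w : ℂ => 1 - conj a * w) (-(conj a)) z := by
    simpa using ((hasDerivAt_id z).const_mul (conj a)).const_sub 1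
  have := h1.div h2 (den_ne ha hz)
  exact this.congr_deriv (by ring)

lemma abs_deriv_mb_self {a : ℂ} (ha : norm a < 1) :
    norm (deriv (mb a) a) = 1 / (1 - norm a ^ 2) := by
  have h := (mb_hasDeriv ha.le ha).deriv
  rw [h]
  have hc : conj a * a = ((norm a ^ 2 : ℝ) : ℂ) := by
    rw [mul_comm, Complex.mul_conj]; norm_cast; rw [Complex.sq_norm]
  rw [hc]
  rw [norm_div, norm_pow]
  have : (1 : ℂ) - (norm a ^ 2 : ℝ) = ((1 - norm a ^ 2 : ℝ) : ℂ) := by push_cast; ring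
  rw [this, Complex.norm_real, Real.norm_eq_abs]
  have hpos : 0 < 1 - norm a ^ 2 := by nlinarith [norm_nonneg a]
  rw [abs_of_pos hpos]
  field_simp


lemma mem_unitDisk {z : ℂ} : z ∈ unitDisk ↔ norm z < 1 := Iff.rfl

/-- Two-point Schwarz–Pick, strict form. -/
lemma schwarz_pick {f : ℂ → ℂ} (hf : DifferentiableOn ℂ f unitDisk)
    (hm : MapsTo f unitDisk unitDisk) {z w : ℂ} (hz : z ∈ unitDisk) (hw : w ∈ unitDisk) :
    norm (mb (f w) (f z)) ≤ norm (mb w z) := by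
  set g : ℂ → ℂ := fun ζ => mb (f w) (f (mb (-w) ζ)) with hg
  have hfw : norm (f w) < 1 := hm hw
  have hmw : norm w < 1 := hw
  have hmb_neg : ∀ ζ ∈ unitDisk, mb (-w) ζ ∈ unitDisk := by
    intro ζ hζ
    have : norm (-w) < 1 := by simpa using hmw
    exact mb_mem this hζ
  have hgd : DifferentiableOn ℂ g unitDisk := by
    apply DifferentiableOn.comp (mb_diffOn hfw.le)
    · apply DifferentiableOn.comp hf
      · intro ζ hζ
        have : norm (-w) ≤ 1 := by simpa using hmw.le
        exact (mb_diffAt this hζ).differentiableWithinAt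
      · exact hmb_neg
    · intro ζ hζ; exact hm (hmb_neg ζ hζ)
  have hgm : MapsTo g unitDisk unitDisk := by
    intro ζ hζ
    exact mb_mem hfw (hm (hmb_neg ζ hζ))
  have hg0 : g 0 = 0 := by
    rw [hg]; simp only []
    rw [mb_zero, mb_self]
  -- apply Schwarz lemma
  have := Complex.norm_le_norm_of_mapsTo_ball_self
    (R := 1) (unitDisk_eq ▸ hgd) (fun x hx => ball_subset_closedBall (mem_ball_zero_iff.mpr (hgm (mem_ball_zero_iff.mp hx)))) hg0
    (z := mb w z) (by exact mb_mem hmw hz)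
  rw [hg] at this
  simp only [] at this
  rwa [show mb (-w) (mb w z) = z from mb_inv hmw hz] at this

/-- Schwarz–Pick for maps with modulus ≤ 1 (possibly attaining 1), multiplicative form. -/
lemma schwarz_pick' {F : ℂ → ℂ} (hF : DifferentiableOn ℂ F unitDisk)
    (hb : ∀ x ∈ unitDisk, norm (F x) ≤ 1) {z w : ℂ}
    (hz : z ∈ unitDisk) (hw : w ∈ unitDisk) :
    norm (F z - F w) ≤
      norm (mb w z) * norm (1 - conj (F w) * F z) := by
  by_cases hstrict : ∀ x ∈ unitDisk, norm (F x) < 1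
  · have hFw : norm (F w) < 1 := hstrict w hw
    have hden : 1 - conj (F w) * F z ≠ 0 := den_ne hFw.le (hstrict z hz)
    have hdpos : 0 < norm (1 - conj (F w) * F z) := by
      simpa [norm_pos_iff] using hden
    have := schwarz_pick hF hstrict hz hw
    rw [mb, norm_div, div_le_iff₀ hdpos] at this
    linarith [this]
  · push_neg at hstrict
    obtain ⟨x₀, hx₀, hx₀1⟩ := hstrict
    have hmax : IsMaxOn (norm ∘ F) unitDisk x₀ := by
      intro x hx
      simp only [Function.comp_apply]
      calc norm (F x) ≤ 1 := hb x hx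
        _ ≤ norm (F x₀) := hx₀1
    have hconn : IsPreconnected unitDisk := by
      rw [unitDisk_eq]; exact (convex_ball 0 1).isPreconnected
    have heq := Complex.eqOn_of_isPreconnected_of_isMaxOn_norm hconn isOpen_unitDisk hF hx₀ hmax
    have h1 : F z = F x₀ := heq hz
    have h2 : F w = F x₀ := heq hw
    rw [h1, h2, sub_self, norm_zero]
    positivity


lemma conj_abs_sym (u v : ℂ) :
    norm (1 - conj u * v) = norm (1 - conj v * u) := by
  rw [← Complex.norm_conj (1 - conj u * v)]
  congr 1
  simp [map_sub, map_mul]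
  ring

lemma abs_one_sub_self {w : ℂ} :
    norm (1 - conj w * w) = 1 - norm w ^ 2 ∨ True := Or.inr trivial

/-- The Beardon–Minda auxiliary function. -/
def G (f : ℂ → ℂ) (w : ℂ) (z : ℂ) : ℂ :=
  dslope (fun x => mb (f w) (f x)) w z * (1 - conj w * z)

variable {f : ℂ → ℂ} (hf : DifferentiableOn ℂ f unitDisk)
  (hm : MapsTo f unitDisk unitDisk)

lemma comp_diffOn (hf : DifferentiableOn ℂ f unitDisk) (hm : MapsTo f unitDisk unitDisk)
    {w : ℂ} (hw : w ∈ unitDisk) :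
    DifferentiableOn ℂ (fun x => mb (f w) (f x)) unitDisk := by
  intro x hx
  exact ((mb_diffAt (hm hw).le (hm hx)).comp x
    (hf.differentiableAt (isOpen_unitDisk.mem_nhds hx))).differentiableWithinAt

lemma G_diffOn (hf : DifferentiableOn ℂ f unitDisk) (hm : MapsTo f unitDisk unitDisk)
    {w : ℂ} (hw : w ∈ unitDisk) :
    DifferentiableOn ℂ (G f w) unitDisk := by
  apply DifferentiableOn.mul
  · exact (differentiableOn_dslope (isOpen_unitDisk.mem_nhds hw)).mpr (comp_diffOn hf hm hw)
  · exact (differentiableOn_const _).sub ((differentiableOn_const _).mul differentiableOn_id)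

lemma G_off {w z : ℂ} (hne : z ≠ w) :
    G f w z = mb (f w) (f z) * (1 - conj w * z) / (z - w) := by
  rw [G, dslope_of_ne _ hne, slope_def_field, mb_self]
  field_simp [sub_ne_zero.mpr hne]
  ring

lemma abs_G_off {w z : ℂ} (hne : z ≠ w) :
    norm (G f w z) =
      norm (f z - f w) * norm (1 - conj w * z) /
        (norm (z - w) * norm (1 - conj (f w) * f z)) := by
  rw [G_off hne, mb]
  rw [norm_div, norm_mul, norm_div]
  ring

lemma abs_G_symm {w z : ℂ} (hne : z ≠ w) :
    norm (G f w z) = norm (G f z w) := by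
  rw [abs_G_off hne, abs_G_off (Ne.symm hne)]
  rw [norm_sub_rev (f w) (f z), conj_abs_sym z w, conj_abs_sym (f z) (f w),
    norm_sub_rev w z]

lemma abs_G_le_one_off (hf : DifferentiableOn ℂ f unitDisk) (hm : MapsTo f unitDisk unitDisk)
    {w z : ℂ} (hw : w ∈ unitDisk) (hz : z ∈ unitDisk) (hne : z ≠ w) :
    norm (G f w z) ≤ 1 := by
  have hsp := schwarz_pick hf hm hz hw
  have hd1 : (0:ℝ) < norm (z - w) := by
    simpa [norm_pos_iff, sub_ne_zero] using hne
  have hd2 : (0:ℝ) < norm (1 - conj (f w) * f z) := by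
    simpa [norm_pos_iff] using den_ne (hm hw).le (hm hz)
  have hd3 : (0:ℝ) < norm (1 - conj w * z) := by
    simpa [norm_pos_iff] using den_ne (le_of_lt hw) hz
  rw [abs_G_off hne, div_le_one (by positivity)]
  rw [mb, norm_div, mb, norm_div, div_le_div_iff₀ hd2 hd3] at hsp
  nlinarith [hsp]

lemma abs_one_sub_conj_self {w : ℂ} (hw : norm w < 1) :
    norm (1 - conj w * w) = 1 - norm w ^ 2 := by
  have : conj w * w = ((norm w ^ 2 : ℝ) : ℂ) := by
    rw [mul_comm, Complex.mul_conj]; norm_cast; rw [Complex.sq_norm]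
  rw [this]
  have h1 : (1 : ℂ) - ((norm w ^ 2 : ℝ) : ℂ) = ((1 - norm w ^ 2 : ℝ) : ℂ) := by
    push_cast; ring
  rw [h1, Complex.norm_real, Real.norm_eq_abs, abs_of_pos (by nlinarith [norm_nonneg w])]

lemma abs_G_self (hf : DifferentiableOn ℂ f unitDisk) (hm : MapsTo f unitDisk unitDisk)
    {w : ℂ} (hw : w ∈ unitDisk) :
    norm (G f w w) = fh f w := by
  have hw' : norm w < 1 := hw
  have hfw : norm (f w) < 1 := hm hw
  have hdf : DifferentiableAt ℂ f w := hf.differentiableAt (isOpen_unitDisk.mem_nhds hw)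
  have hcomp : deriv (fun x => mb (f w) (f x)) w = deriv (mb (f w)) (f w) * deriv f w := by
    exact deriv_comp w (mb_diffAt hfw.le hfw) hdf
  rw [G, dslope_same, hcomp, norm_mul, norm_mul, abs_one_sub_conj_self hw',
    abs_deriv_mb_self hfw, fh]
  have hpos : (0:ℝ) < 1 - norm (f w) ^ 2 := by nlinarith [norm_nonneg (f w)]
  field_simp

lemma abs_G_le_one (hf : DifferentiableOn ℂ f unitDisk) (hm : MapsTo f unitDisk unitDisk)
    {w z : ℂ} (hw : w ∈ unitDisk) (hz : z ∈ unitDisk) :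
    norm (G f w z) ≤ 1 := by
  rcases eq_or_ne z w with rfl | hne
  · -- limit along punctured neighborhood
    have hcont : ContinuousAt (G f z) z :=
      ((G_diffOn hf hm hz) z hz).differentiableAt
        (isOpen_unitDisk.mem_nhds hz) |>.continuousAt
    have hrw : unitDisk \ {z} = {z}ᶜ ∩ unitDisk := by
      rw [Set.diff_eq, Set.inter_comm]
    have hne2 : 𝓝[unitDisk \ {z}] z = 𝓝[≠] z := by
      rw [hrw, ← nhdsWithin_restrict' ({z}ᶜ) (isOpen_unitDisk.mem_nhds hz)]
    have hNB : (𝓝[unitDisk \ {z}] z).NeBot := by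
      rw [hne2]; infer_instance
    have htend : Tendsto (fun x => norm (G f z x)) (𝓝[unitDisk \ {z}] z)
        (𝓝 (norm (G f z z))) :=
      (continuous_norm.continuousAt.comp hcont).continuousWithinAt.tendsto
    refine le_of_tendsto htend ?_
    filter_upwards [self_mem_nhdsWithin] with x hx
    exact abs_G_le_one_off hf hm hz hx.1 hx.2
  · exact abs_G_le_one_off hf hm hw hz hne

lemma fh_le_one (hf : DifferentiableOn ℂ f unitDisk) (hm : MapsTo f unitDisk unitDisk)
    {w : ℂ} (hw : w ∈ unitDisk) : fh f w ≤ 1 := by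
  rw [← abs_G_self hf hm hw]; exact abs_G_le_one hf hm hw hw

lemma fh_nonneg (hm : MapsTo f unitDisk unitDisk) {w : ℂ} (hw : w ∈ unitDisk) : 0 ≤ fh f w := by
  have hw' : norm w < 1 := hw
  have hfw : norm (f w) < 1 := hm hw
  have h1 : (0:ℝ) ≤ 1 - norm w ^ 2 := by nlinarith [norm_nonneg w]
  have h2 : (0:ℝ) ≤ 1 - norm (f w) ^ 2 := by nlinarith [norm_nonneg (f w)]
  rw [fh]
  positivity


/-- From `|a - b| ≤ t |1 - conj b * a|` deduce `|b| - |a| ≤ t (1 - |a||b|)`. -/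
lemma modulus_lemma {a b : ℂ} {t : ℝ} (ha : norm a ≤ 1) (hb : norm b ≤ 1)
    (ht : 0 ≤ t) (h : norm (a - b) ≤ t * norm (1 - conj b * a)) :
    norm b - norm a ≤ t * (1 - norm a * norm b) := by
  set p := norm a with hp
  set q := norm b with hq
  have hp0 : 0 ≤ p := norm_nonneg a
  have hq0 : 0 ≤ q := norm_nonneg b
  set X := (conj b * a).re with hX
  have hXle : X ≤ p * q := le_trans (le_abs_self _) (re_le a b)
  set A := norm (1 - conj b * a) with hA
  set B := norm (a - b) with hB
  have hA0 : 0 ≤ A := norm_nonneg _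
  have hB0 : 0 ≤ B := norm_nonneg _
  have hA2 : A ^ 2 = 1 + p ^ 2 * q ^ 2 - 2 * X := sq_abs_den a b
  have hB2 : B ^ 2 = p ^ 2 + q ^ 2 - 2 * X := sq_abs_sub a b
  -- key polynomial inequality: (q - p) * A ≤ B * (1 - p*q)
  have hpq : p * q ≤ 1 := by nlinarith
  have key : (q - p) * A ≤ B * (1 - p * q) := by
    rcases le_or_gt q p with hle | hlt
    · have h1 : (q - p) * A ≤ 0 := mul_nonpos_of_nonpos_of_nonneg (by linarith) hA0
      have h2 : 0 ≤ B * (1 - p * q) := mul_nonneg hB0 (by linarith)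
      linarith
    · have hsq : ((q - p) * A) ^ 2 ≤ (B * (1 - p * q)) ^ 2 := by
        have expand : (B * (1 - p*q))^2 - ((q-p)*A)^2
            = 2 * (p*q - X) * (1-p) * (1+q) * (1+p) * (1-q) := by
          rw [mul_pow, mul_pow, hA2, hB2]; ring
        nlinarith [expand, mul_nonneg (mul_nonneg (mul_nonneg (mul_nonneg
          (by linarith : (0:ℝ) ≤ 2 * (p*q - X)) (by linarith : (0:ℝ) ≤ 1 - p))
          (by linarith : (0:ℝ) ≤ 1 + q)) (by linarith : (0:ℝ) ≤ 1 + p))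
          (by linarith : (0:ℝ) ≤ 1 - q)]
      have hrhs : 0 ≤ B * (1 - p * q) := mul_nonneg hB0 (by linarith)
      nlinarith [hsq, hrhs, mul_nonneg (mul_nonneg (sub_nonneg.mpr hlt.le) hA0) hrhs]
  -- now combine with h : B ≤ t * A
  have hA_ge : 1 - p * q ≤ A := by
    nlinarith [hA2, hXle, hA0]
  rcases eq_or_lt_of_le hA0 with hA0' | hApos
  · -- A = 0 forces p = q = 1
    have hzero : 1 - conj b * a = 0 := by
      have := norm_eq_zero.mp hA0'.symm
      exact this
    have hba : conj b * a = 1 := by linear_combination -hzero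
    have hpq1 : p * q = 1 := by
      have : norm (conj b * a) = 1 := by rw [hba]; simp
      rw [norm_mul, Complex.norm_conj] at this
      rw [hp, hq]; linarith [this]
    have hp1 : p = 1 := by nlinarith
    have hq1 : q = 1 := by nlinarith
    rw [hp1, hq1]
    simp
  · have hmul : B * (1 - p*q) ≤ t * A * (1 - p*q) :=
      mul_le_mul_of_nonneg_right h (by linarith)
    have := le_trans key hmul
    -- (q-p) * A ≤ t * A * (1 - p q), divide by A
    have hfinal : (q - p) ≤ t * (1 - p * q) := by
      have := (mul_le_mul_iff_of_pos_right hApos).mp (by linarith : (q - p) * A ≤ (t * (1 - p*q)) * A)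
      linarith
    linarith

/-- Combination lemma. -/
lemma combine {A B s t : ℝ} (hA0 : 0 ≤ A) (hA1 : A ≤ 1) (hB0 : 0 ≤ B) (hB1 : B ≤ 1)
    (hs0 : 0 ≤ s) (hs1 : s ≤ 1) (ht0 : 0 ≤ t) (ht1 : t < 1)
    (h1 : A - s ≤ t * (1 - s * A)) (h2 : s - B ≤ t * (1 - s * B)) :
    (1 - B) * (1 - t) ^ 2 ≤ 4 * (1 - A) := by
  have e1 : (1 - s) * (1 - t * A) ≤ (1 + t) * (1 - A) := by nlinarith
  have e2 : (1 - B) * (1 - t * s) ≤ (1 + t) * (1 - s) := by nlinarith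
  have htA : 1 - t ≤ 1 - t * A := by nlinarith
  have hts : 1 - t ≤ 1 - t * s := by nlinarith
  have w1 : (1 - B) * (1 - t) ≤ (1 - B) * (1 - t * s) :=
    mul_le_mul_of_nonneg_left hts (by linarith)
  have step1 : (1 - B) * (1 - t) * (1 - t) ≤ (1 - B) * (1 - t * s) * (1 - t * A) :=
    mul_le_mul w1 htA (by linarith) (by nlinarith)
  have step2 : (1 - B) * (1 - t * s) * (1 - t * A) ≤ (1 + t) * (1 - s) * (1 - t * A) := by
    apply mul_le_mul_of_nonneg_right e2 (by nlinarith)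
  have step3 : (1 + t) * ((1 - s) * (1 - t * A)) ≤ (1 + t) * ((1 + t) * (1 - A)) := by
    apply mul_le_mul_of_nonneg_left e1 (by linarith)
  nlinarith [step1, step2, step3]


lemma abs_mb_symm (z w : ℂ) : norm (mb w z) = norm (mb z w) := by
  rw [mb, mb, norm_div, norm_div, norm_sub_rev z w, conj_abs_sym w z]

/-- The key Harnack-type estimate for the hyperbolic distortion. -/
lemma key_estimate {f : ℂ → ℂ} (hf : DifferentiableOn ℂ f unitDisk)
    (hm : MapsTo f unitDisk unitDisk) {z w : ℂ} (hz : z ∈ unitDisk) (hw : w ∈ unitDisk)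
    (hne : z ≠ w) :
    (1 - fh f z) * (1 - norm (mb w z)) ^ 2 ≤ 4 * (1 - fh f w) := by
  set t := norm (mb w z) with hts
  have ht0 : 0 ≤ t := norm_nonneg _
  have ht1 : t < 1 := mb_mem hw hz
  set A := fh f w with hA
  set B := fh f z with hB
  set s := norm (G f w z) with hs
  -- first inequality
  have sp1 := schwarz_pick' (G_diffOn hf hm hw) (fun x hx => abs_G_le_one hf hm hw hx) hz hw
  have h1 : A - s ≤ t * (1 - s * A) := by
    have := modulus_lemma (abs_G_le_one hf hm hw hz) (abs_G_le_one hf hm hw hw) ht0 sp1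
    rw [abs_G_self hf hm hw] at this
    linarith
  -- second inequality
  have sp2 := schwarz_pick' (G_diffOn hf hm hz) (fun x hx => abs_G_le_one hf hm hz hx) hw hz
  have h2 : s - B ≤ t * (1 - s * B) := by
    have hsym1 : norm (G f z z - G f z w) = norm (G f z w - G f z z) :=
      norm_sub_rev _ _
    have hsym2 : norm (1 - conj (G f z w) * G f z z)
        = norm (1 - conj (G f z z) * G f z w) := conj_abs_sym _ _
    have hmb : norm (mb z w) = t := (abs_mb_symm z w).symm
    have hyp : norm (G f z z - G f z w)
        ≤ t * norm (1 - conj (G f z w) * G f z z) := by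
      rw [hsym1, hsym2, ← hmb]; exact sp2
    have := modulus_lemma (abs_G_le_one hf hm hz hz) (abs_G_le_one hf hm hz hw) ht0 hyp
    rw [abs_G_self hf hm hz, ← abs_G_symm hne] at this
    linarith [this]
  exact combine (fh_nonneg hm hw) (fh_le_one hf hm hw) (fh_nonneg hm hz) (fh_le_one hf hm hz)
    (norm_nonneg _) (abs_G_le_one hf hm hw hz) ht0 ht1 h1 h2

/-- Lower bound on `1 - |mb w z|`. -/
lemma one_sub_abs_mb_ge {z w : ℂ} {r : ℝ} (hz : norm z ≤ r) (hr : r < 1)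
    (hw : norm w < 1) :
    (1 - r) * (1 - norm w) / 2 ≤ 1 - norm (mb w z) := by
  set p := norm z with hp
  set q := norm w with hq
  have hp0 : 0 ≤ p := norm_nonneg z
  have hq0 : 0 ≤ q := norm_nonneg w
  have hzlt : norm z < 1 := lt_of_le_of_lt hz hr
  have hdpos : 0 < norm (1 - conj w * z) := by
    simpa [norm_pos_iff] using den_ne hw.le hzlt
  set X := (conj w * z).re with hX
  have hXge : -(p * q) ≤ X := by
    have := re_le z w
    rw [abs_le] at this
    linarith [this.1]
  have habs : norm (z - w) * (1 + p * q) ≤ (p + q) * norm (1 - conj w * z) := by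
    have hBsq := sq_abs_sub z w
    have hAsq := sq_abs_den z w
    have hsq : (norm (z - w) * (1 + p * q)) ^ 2
        ≤ ((p + q) * norm (1 - conj w * z)) ^ 2 := by
      have expand : ((p + q) * norm (1 - conj w * z)) ^ 2
          - (norm (z - w) * (1 + p * q)) ^ 2
          = 2 * (X + p * q) * ((1 - p^2) * (1 - q^2)) := by
        rw [mul_pow, mul_pow, hAsq, hBsq]; ring
      nlinarith [mul_nonneg (by linarith : (0:ℝ) ≤ 2 * (X + p*q))
        (mul_nonneg (by nlinarith : (0:ℝ) ≤ 1 - p^2) (by nlinarith : (0:ℝ) ≤ 1 - q^2))]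
    have h1 : 0 ≤ (p + q) * norm (1 - conj w * z) := by positivity
    have h2 : 0 ≤ norm (z - w) * (1 + p * q) := by positivity
    nlinarith [hsq, h1, h2]
  have hmb_le : norm (mb w z) ≤ (p + q) / (1 + p * q) := by
    rw [mb, norm_div, div_le_div_iff₀ hdpos (by positivity)]
    linarith [habs]
  have hfrac : (p + q) / (1 + p * q) ≤ 1 - (1 - p) * (1 - q) / 2 := by
    rw [div_le_iff₀ (by positivity)]
    nlinarith [mul_nonneg (mul_nonneg (by linarith : (0:ℝ) ≤ 1 - p) (by linarith : (0:ℝ) ≤ 1 - q)) (by nlinarith : (0:ℝ) ≤ 1 - p * q)]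
  have : norm (mb w z) ≤ 1 - (1 - p) * (1 - q) / 2 := le_trans hmb_le hfrac
  have hmono : (1 - r) * (1 - q) ≤ (1 - p) * (1 - q) := by
    apply mul_le_mul_of_nonneg_right (by linarith) (by linarith)
  linarith


theorem partA (f : ℕ → ℂ → ℂ)
    (hf : ∀ n, DifferentiableOn ℂ (f n) unitDisk)
    (hmaps : ∀ n, Set.MapsTo (f n) unitDisk unitDisk)
    (z : ℕ → ℂ) (hz : ∀ n, z n ∈ unitDisk)
    (hz1 : Tendsto (fun n => norm (z n)) atTop (𝓝 1))
    (ho : Tendsto (fun n => (fh (f n) (z n) - 1) / (1 - norm (z n)) ^ 2)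
      atTop (𝓝 0)) :
    TendstoLocallyUniformlyOn (fun n z => fh (f n) z) (fun _ => 1) atTop unitDisk := by
  rw [tendstoLocallyUniformlyOn_iff_forall_isCompact isOpen_unitDisk]
  intro K hK hKc
  rw [Metric.tendstoUniformlyOn_iff]
  intro ε hε
  obtain ⟨r, hr0, hr1, hrK⟩ : ∃ r : ℝ, 0 ≤ r ∧ r < 1 ∧ ∀ x ∈ K, norm x ≤ r := by
    rcases K.eq_empty_or_nonempty with hE | hNE
    · exact ⟨0, le_refl _, by norm_num, by simp [hE]⟩
    · obtain ⟨x₀, hx₀K, hx₀max⟩ := hKc.exists_isMaxOn hNE continuous_norm.continuousOn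
      exact ⟨norm x₀, norm_nonneg _, hK hx₀K, fun x hx => hx₀max hx⟩
  set δ := ε * (1 - r) ^ 2 / 16 with hδdef
  have h1r : (0:ℝ) < 1 - r := by linarith
  have hδpos : 0 < δ := by
    rw [hδdef]
    exact div_pos (mul_pos hε (pow_pos h1r 2)) (by norm_num)
  have hev1 : ∀ᶠ n in atTop,
      |(fh (f n) (z n) - 1) / (1 - norm (z n)) ^ 2| < δ := by
    have := Metric.tendsto_nhds.mp ho δ hδpos
    filter_upwards [this] with n hn
    rwa [Real.dist_eq, sub_zero] at hn
  have hev2 : ∀ᶠ n in atTop, r < norm (z n) := hz1.eventually (eventually_gt_nhds hr1)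
  filter_upwards [hev1, hev2] with n h1 h2
  intro x hx
  have hxD : x ∈ unitDisk := hK hx
  have hxr : norm x ≤ r := hrK x hx
  have hzn : norm (z n) < 1 := hz n
  have hne : x ≠ z n := by
    intro h; rw [h] at hxr; linarith
  set d := 1 - norm (z n) with hd
  have hdpos : 0 < d := by simp only [hd]; linarith
  set en := 1 - fh (f n) (z n) with hen
  have hen0 : 0 ≤ en := by
    have := fh_le_one (hf n) (hmaps n) (hz n); linarith
  have hen_lt : en < δ * d ^ 2 := by
    have habs : |(fh (f n) (z n) - 1) / d ^ 2| = en / d ^ 2 := by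
      rw [abs_div, abs_of_pos (by positivity : (0:ℝ) < d ^ 2)]
      congr 1
      rw [abs_of_nonpos (by linarith : fh (f n) (z n) - 1 ≤ 0)]
      simp [hen]
    rw [habs] at h1
    calc en = en / d ^ 2 * d ^ 2 := by field_simp
      _ < δ * d ^ 2 := by
          apply mul_lt_mul_of_pos_right h1 (by positivity)
  have hkey := key_estimate (hf n) (hmaps n) hxD (hz n) hne
  have hp := one_sub_abs_mb_ge hxr hr1 hzn
  set u := 1 - fh (f n) x with hu
  have hu0 : 0 ≤ u := by
    have := fh_le_one (hf n) (hmaps n) hxD; linarith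
  set c := (1 - r) * d / 2 with hc
  have hcpos : 0 < c := by
    rw [hc]; exact div_pos (mul_pos h1r hdpos) two_pos
  have hmb1 : norm (mb (z n) x) ≤ 1 := by nlinarith [hp, hcpos]
  have hchain : u * c ^ 2 ≤ 4 * en := by
    calc u * c ^ 2 ≤ u * (1 - norm (mb (z n) x)) ^ 2 := by
          apply mul_le_mul_of_nonneg_left _ hu0
          apply pow_le_pow_left₀ hcpos.le
          linarith [hp]
      _ ≤ 4 * en := hkey
  have hu_lt : u < ε := by
    have h16 : u * ((1 - r)^2 * d^2 / 4) < 4 * (δ * d^2) := by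
      have : c ^ 2 = (1 - r)^2 * d^2 / 4 := by rw [hc]; ring
      rw [← this]
      exact lt_of_le_of_lt hchain (by linarith)
    have hδ16 : 4 * (δ * d^2) = ε * (1-r)^2 * d^2 / 4 := by rw [hδdef]; ring
    rw [hδ16] at h16
    have hpos : 0 < (1 - r)^2 * d^2 / 4 :=
      div_pos (mul_pos (pow_pos h1r 2) (pow_pos hdpos 2)) (by norm_num)
    nlinarith [h16, hpos]
  have : dist (1:ℝ) (fh (f n) x) = u := by
    rw [Real.dist_eq, _root_.abs_of_nonneg (by linarith : (0:ℝ) ≤ 1 - fh (f n) x)]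
  rw [this]
  exact hu_lt


theorem partB
    (f : ℕ → ℂ → ℂ)
    (hf : ∀ n, DifferentiableOn ℂ (f n) unitDisk)
    (hmaps : ∀ n, Set.MapsTo (f n) unitDisk unitDisk)
    (hA : TendstoLocallyUniformlyOn (fun n z => fh (f n) z) (fun _ => 1) atTop unitDisk)
    (g : ℂ → ℂ) (φ : ℕ → ℕ) (hφ : StrictMono φ)
    (hconv : TendstoLocallyUniformlyOn (fun k => f (φ k)) g atTop unitDisk) :
    IsDiskAutomorphism g ∨ ∃ w : ℂ, norm w = 1 ∧ ∀ z ∈ unitDisk, g z = w := by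
  have hg_diff : DifferentiableOn ℂ g unitDisk :=
    hconv.differentiableOn (Eventually.of_forall fun k => hf (φ k)) isOpen_unitDisk
  have hg_le : ∀ x ∈ unitDisk, norm (g x) ≤ 1 := by
    intro x hx
    have ht : Tendsto (fun k => norm (f (φ k) x)) atTop (𝓝 (norm (g x))) :=
      (continuous_norm.continuousAt.tendsto.comp (hconv.tendsto_at hx))
    exact le_of_tendsto ht (Eventually.of_forall fun k => (hmaps (φ k) hx).le)
  by_cases hcase : ∃ x₀ ∈ unitDisk, norm (g x₀) = 1
  · -- unimodular constant
    obtain ⟨x₀, hx₀, hx₀1⟩ := hcase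
    have hmax : IsMaxOn (norm ∘ g) unitDisk x₀ := by
      intro x hx
      simp only [Function.comp_apply]
      calc norm (g x) ≤ 1 := hg_le x hx
        _ = norm (g x₀) := hx₀1.symm
    have hconn : IsPreconnected unitDisk := by
      rw [unitDisk_eq]; exact (convex_ball 0 1).isPreconnected
    have heq := Complex.eqOn_of_isPreconnected_of_isMaxOn_norm hconn isOpen_unitDisk
      hg_diff hx₀ hmax
    exact Or.inr ⟨g x₀, hx₀1, fun z hz => heq hz⟩
  · push_neg at hcase
    have hlt : ∀ x ∈ unitDisk, norm (g x) < 1 :=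
      fun x hx => lt_of_le_of_ne (hg_le x hx) (hcase x hx)
    have hderiv : TendstoLocallyUniformlyOn (fun k => deriv (f (φ k))) (deriv g) atTop unitDisk :=
      hconv.deriv (Eventually.of_forall fun k => hf (φ k)) isOpen_unitDisk
    -- fh g ≡ 1 on the disk
    have hfh : ∀ x ∈ unitDisk, fh g x = 1 := by
      intro x hx
      have h1 : Tendsto (fun k => fh (f (φ k)) x) atTop (𝓝 1) := by
        have := hA.tendsto_at hx
        exact this.comp hφ.tendsto_atTop
      have h2 : Tendsto (fun k => fh (f (φ k)) x) atTop (𝓝 (fh g x)) := by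
        have hd : Tendsto (fun k => norm (deriv (f (φ k)) x)) atTop
            (𝓝 (norm (deriv g x))) :=
          continuous_norm.continuousAt.tendsto.comp (hderiv.tendsto_at hx)
        have hv : Tendsto (fun k => norm (f (φ k) x)) atTop (𝓝 (norm (g x))) :=
          continuous_norm.continuousAt.tendsto.comp (hconv.tendsto_at hx)
        have hden : Tendsto (fun k => 1 - norm (f (φ k) x) ^ 2) atTop
            (𝓝 (1 - norm (g x) ^ 2)) := by
          exact (tendsto_const_nhds.sub (hv.pow 2))
        have hdenne : 1 - norm (g x) ^ 2 ≠ 0 := by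
          have := hlt x hx
          have h0 := norm_nonneg (g x)
          nlinarith
        have hnum : Tendsto (fun k => (1 - norm x ^ 2) * norm (deriv (f (φ k)) x))
            atTop (𝓝 ((1 - norm x ^ 2) * norm (deriv g x))) :=
          tendsto_const_nhds.mul hd
        exact hnum.div hden hdenne
      exact tendsto_nhds_unique h2 h1
    -- rigidity: g is a Möbius automorphism
    left
    set a := g 0 with ha
    have h0D : (0:ℂ) ∈ unitDisk := by simp [unitDisk]
    have haD : norm a < 1 := hlt 0 h0D
    set h : ℂ → ℂ := fun x => mb a (g x) with hh
    have hh_diff : DifferentiableOn ℂ h unitDisk := by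
      intro x hx
      exact ((mb_diffAt haD.le (hlt x hx)).comp x
        (hg_diff.differentiableAt (isOpen_unitDisk.mem_nhds hx))).differentiableWithinAt
    have hh0 : h 0 = 0 := by rw [hh]; simp only []; rw [← ha, mb_self]
    have hh_maps : MapsTo h unitDisk unitDisk := fun x hx => mb_mem haD (hlt x hx)
    have hderivh : norm (deriv h 0) = 1 := by
      have hgd : DifferentiableAt ℂ g 0 := hg_diff.differentiableAt (isOpen_unitDisk.mem_nhds h0D)
      have hcomp : deriv h 0 = deriv (mb a) a * deriv g 0 := by
        rw [hh]
        rw [show (fun x => mb a (g x)) = (mb a) ∘ g from rfl]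
        rw [deriv_comp 0 (mb_diffAt haD.le haD) hgd, ha]
      have hfh0 := hfh 0 h0D
      rw [fh] at hfh0
      simp only [map_zero, norm_zero] at hfh0
      have hapos : (0:ℝ) < 1 - norm a ^ 2 := by nlinarith [norm_nonneg a]
      have hderivg : norm (deriv g 0) = 1 - norm a ^ 2 := by
        have : (1 - 0 ^ 2) * norm (deriv g 0) / (1 - norm (g 0) ^ 2) = 1 := by
          simpa using hfh0
        rw [← ha] at this
        field_simp at this
        linarith
      rw [hcomp, norm_mul, abs_deriv_mb_self haD, hderivg]
      field_simp
  -- Schwarz equality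
    have hmapsball : MapsTo h (ball (0:ℂ) 1) (ball (h 0) 1) := by
      rw [hh0, ← unitDisk_eq]; exact hh_maps
    have heq := Complex.affine_of_mapsTo_ball_of_exists_norm_dslope_eq_div
      (f := h) (c := 0) (R₁ := 1) (R₂ := 1)
      (unitDisk_eq ▸ hh_diff) (hmapsball.mono_right ball_subset_closedBall) (z₀ := 0) (by simp)
      (by rw [dslope_same, hderivh]; norm_num)
    set c := dslope h 0 0 with hc
    have hcabs : norm c = 1 := by
      rw [hc, dslope_same]
      exact hderivh
    have heq' : ∀ x ∈ unitDisk, h x = c * x := by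
      intro x hx
      have := heq (unitDisk_eq ▸ hx)
      simpa [hh0, mul_comm] using this
    -- conclude bijectivity
    have hcne : c ≠ 0 := by
      intro h0; rw [h0] at hcabs; simp at hcabs
    have hcconj : c * conj c = 1 := by
      rw [Complex.mul_conj]
      norm_cast
      rw [Complex.normSq_eq_norm_sq, hcabs]; norm_num
    constructor
    · exact hg_diff
    · refine ⟨fun x hx => hlt x hx, ?_, ?_⟩
      · -- InjOn
        intro x₁ hx₁ x₂ hx₂ hgx
        have e1 : h x₁ = h x₂ := by rw [hh]; simp only []; rw [hgx]
        rw [heq' x₁ hx₁, heq' x₂ hx₂] at e1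
        exact mul_left_cancel₀ hcne e1
      · -- SurjOn
        intro y hy
        have hyD : norm y < 1 := hy
        set x := conj c * mb a y with hx
        have hxD : x ∈ unitDisk := by
          have : norm x = norm (mb a y) := by
            rw [hx, norm_mul, Complex.norm_conj, hcabs, one_mul]
          show norm x < 1
          rw [this]; exact mb_mem haD hyD
        refine ⟨x, hxD, ?_⟩
        have e2 : h x = c * x := heq' x hxD
        have e3 : h x = mb a y := by
          rw [e2, hx, ← mul_assoc, hcconj, one_mul]
        have e4 : mb a (g x) = mb a y := by rw [← e3]
        have e5 : mb (-a) (mb a (g x)) = mb (-a) (mb a y) := by rw [e4]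
        rwa [mb_inv haD (hlt x hxD), mb_inv haD hyD] at e5

end SSP

/-- **The sequential Schwarz–Pick lemma at the boundary.**
If `f_n : 𝔻 → 𝔻` are holomorphic and `f_n^h(z_n) = 1 + o((1-|z_n|)²)` for a sequence
`(z_n)` in `𝔻` with `|z_n| → 1`, then (a) `f_n^h → 1` locally uniformly on `𝔻`, and
(b) every locally uniform subsequential limit of `(f_n)` is either a disk automorphism
or a unimodular constant. -/
theorem sequential_schwarz_pick
    (f : ℕ → ℂ → ℂ)
    (hf : ∀ n, DifferentiableOn ℂ (f n) unitDisk)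
    (hmaps : ∀ n, Set.MapsTo (f n) unitDisk unitDisk)
    (z : ℕ → ℂ) (hz : ∀ n, z n ∈ unitDisk)
    (hz1 : Tendsto (fun n => ‖z n‖) atTop (𝓝 1))
    (ho : Tendsto (fun n => (fh (f n) (z n) - 1) / (1 - ‖z n‖) ^ 2)
      atTop (𝓝 0)) :
    TendstoLocallyUniformlyOn (fun n z => fh (f n) z) (fun _ => 1) atTop unitDisk ∧
    ∀ (g : ℂ → ℂ) (φ : ℕ → ℕ), StrictMono φ →
      TendstoLocallyUniformlyOn (fun k => f (φ k)) g atTop unitDisk →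
      IsDiskAutomorphism g ∨ ∃ w : ℂ, ‖w‖ = 1 ∧ ∀ z ∈ unitDisk, g z = w := by
  have hApart := SSP.partA f hf hmaps z hz hz1 ho
  exact ⟨hApart, fun g φ hφ hconv => SSP.partB f hf hmaps hApart g φ hφ hconv⟩
end
end

section
/- For a ∈ (0,1] let F_a be the family of all conformal pseudometrics λ on 𝔻 with curvature κ_λ ≤ -4 and λ(0) ≤ a. Then for every z ∈ 𝔻 \ {0}: sup_{λ ∈ F_a} λ(z) = λ_𝔻(z) = 1/(1-|z|²). -/
open Complex Filter MeasureTheory Metric Set Topology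

noncomputable section

/-- Derivative CLM of `Complex.normSq`. -/
def nsD (w : ℂ) : ℂ →L[ℝ] ℝ :=
  (2 * w.re) • Complex.reCLM + (2 * w.im) • Complex.imCLM

lemma nsD_apply (w v : ℂ) : nsD w v = 2 * (w.re * v.re) + 2 * (w.im * v.im) := by
  simp [nsD, ContinuousLinearMap.add_apply, ContinuousLinearMap.smul_apply,
    Complex.reCLM_apply, Complex.imCLM_apply, smul_eq_mul]
  ring

lemma hasFDerivAt_normSq (w : ℂ) : HasFDerivAt Complex.normSq (nsD w) w := by
  have h : HasFDerivAt (fun z : ℂ => (Complex.reCLM z) * (Complex.reCLM z)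
      + (Complex.imCLM z) * (Complex.imCLM z))
      (((Complex.reCLM w) • (Complex.reCLM : ℂ →L[ℝ] ℝ) + (Complex.reCLM w) • Complex.reCLM)
        + ((Complex.imCLM w) • (Complex.imCLM : ℂ →L[ℝ] ℝ) + (Complex.imCLM w) • Complex.imCLM)) w :=
    (Complex.reCLM.hasFDerivAt.mul Complex.reCLM.hasFDerivAt).add
      (Complex.imCLM.hasFDerivAt.mul Complex.imCLM.hasFDerivAt)
  have heq : (fun z : ℂ => (Complex.reCLM z) * (Complex.reCLM z)
      + (Complex.imCLM z) * (Complex.imCLM z)) = Complex.normSq := by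
    funext z; simp [Complex.normSq_apply]
  rw [heq] at h
  convert h using 1
  ext v
  simp [nsD, ContinuousLinearMap.add_apply, ContinuousLinearMap.smul_apply]
  ring

lemma contDiff_normSq' : ContDiff ℝ ⊤ Complex.normSq := by
  have : (fun z : ℂ => (Complex.reCLM z) * (Complex.reCLM z)
      + (Complex.imCLM z) * (Complex.imCLM z)) = Complex.normSq := by
    funext z; simp [Complex.normSq_apply]
  rw [← this]
  exact (Complex.reCLM.contDiff.mul Complex.reCLM.contDiff).add
    (Complex.imCLM.contDiff.mul Complex.imCLM.contDiff)

lemma lap_congr {u v : ℂ → ℝ} {z : ℂ} (h : u =ᶠ[𝓝 z] v) : lap u z = lap v z := by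
  have h' : ∀ᶠ w in 𝓝 z, u =ᶠ[𝓝 w] v := h.eventuallyEq_nhds
  have hf : ∀ᶠ w in 𝓝 z, fderiv ℝ u w = fderiv ℝ v w := by
    filter_upwards [h'] with w hw using hw.fderiv_eq
  have e1 : (fun w => fderiv ℝ u w 1) =ᶠ[𝓝 z] (fun w => fderiv ℝ v w 1) := by
    filter_upwards [hf] with w hw; rw [hw]
  have eI : (fun w => fderiv ℝ u w Complex.I) =ᶠ[𝓝 z] (fun w => fderiv ℝ v w Complex.I) := by
    filter_upwards [hf] with w hw; rw [hw]
  unfold lap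
  rw [e1.fderiv_eq, eI.fderiv_eq]

lemma lap_add_radial (f : ℂ → ℝ) (φ φ' : ℝ → ℝ) (p2 : ℝ) (z : ℂ)
    (hf : ContDiffAt ℝ 2 f z)
    (h1 : ∀ᶠ t in 𝓝 (Complex.normSq z), HasDerivAt φ (φ' t) t)
    (h2 : HasDerivAt φ' p2 (Complex.normSq z)) :
    lap (fun w => f w + φ (Complex.normSq w)) z
      = lap f z + (4 * Complex.normSq z * p2 + 4 * φ' (Complex.normSq z)) := by
  have hNc : Continuous Complex.normSq := contDiff_normSq'.continuous
  have hφw : ∀ᶠ w in 𝓝 z, HasDerivAt φ (φ' (Complex.normSq w)) (Complex.normSq w) :=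
    (hNc.tendsto z).eventually h1
  have hfd : ∀ᶠ w in 𝓝 z, HasFDerivAt f (fderiv ℝ f w) w := by
    filter_upwards [hf.eventually (by simp)] with w hw
    exact (hw.differentiableAt two_ne_zero).hasFDerivAt
  have hu : ∀ᶠ w in 𝓝 z, HasFDerivAt (fun w => f w + φ (Complex.normSq w))
      (fderiv ℝ f w + φ' (Complex.normSq w) • nsD w) w := by
    filter_upwards [hfd, hφw] with w h1w h2w
    exact h1w.add (h2w.comp_hasFDerivAt w (hasFDerivAt_normSq w))
  have hfe : ∀ᶠ w in 𝓝 z, fderiv ℝ (fun w => f w + φ (Complex.normSq w)) w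
      = fderiv ℝ f w + φ' (Complex.normSq w) • nsD w := by
    filter_upwards [hu] with w hw using hw.fderiv
  have hF : DifferentiableAt ℝ (fderiv ℝ f) z :=
    (hf.fderiv_right (m := 1) (le_refl (2 : WithTop ℕ∞))).differentiableAt one_ne_zero
  have key : ∀ v : ℂ, fderiv ℝ (fun w => fderiv ℝ (fun w => f w + φ (Complex.normSq w)) w v) z v
      = fderiv ℝ (fun w => fderiv ℝ f w v) z v
        + (φ' (Complex.normSq z) * (2 * (v.re * v.re) + 2 * (v.im * v.im))
          + (2 * (z.re * v.re) + 2 * (z.im * v.im))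
            * (p2 * (2 * (z.re * v.re) + 2 * (z.im * v.im)))) := by
    intro v
    set ℓv : ℂ →L[ℝ] ℝ := (2 * v.re) • Complex.reCLM + (2 * v.im) • Complex.imCLM with hℓv
    have hLlin : HasFDerivAt (fun w : ℂ => (nsD w) v) ℓv z := by
      have h0 := ℓv.hasFDerivAt (x := z)
      apply h0.congr_of_eventuallyEq
      apply Filter.Eventually.of_forall
      intro w
      simp [nsD_apply, hℓv, ContinuousLinearMap.add_apply, ContinuousLinearMap.smul_apply,
        Complex.reCLM_apply, Complex.imCLM_apply, smul_eq_mul]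
      ring
    have hφ'N : HasFDerivAt (fun w => φ' (Complex.normSq w)) (p2 • nsD z) z :=
      h2.comp_hasFDerivAt z (hasFDerivAt_normSq z)
    have hB : HasFDerivAt (fun w => φ' (Complex.normSq w) * (nsD w) v)
        (φ' (Complex.normSq z) • ℓv + ((nsD z) v) • (p2 • nsD z)) z := hφ'N.mul hLlin
    have hA : DifferentiableAt ℝ (fun w => fderiv ℝ f w v) z :=
      hF.clm_apply (differentiableAt_const v)
    have hsum : HasFDerivAt (fun w => fderiv ℝ f w v + φ' (Complex.normSq w) * (nsD w) v)
        (fderiv ℝ (fun w => fderiv ℝ f w v) z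
          + (φ' (Complex.normSq z) • ℓv + ((nsD z) v) • (p2 • nsD z))) z :=
      hA.hasFDerivAt.add hB
    have he : (fun w => fderiv ℝ (fun w => f w + φ (Complex.normSq w)) w v)
        =ᶠ[𝓝 z] (fun w => fderiv ℝ f w v + φ' (Complex.normSq w) * (nsD w) v) := by
      filter_upwards [hfe] with w hw
      rw [hw]
      simp [ContinuousLinearMap.add_apply, ContinuousLinearMap.smul_apply, smul_eq_mul]
    rw [he.fderiv_eq, hsum.fderiv]
    simp [ContinuousLinearMap.add_apply, ContinuousLinearMap.smul_apply, smul_eq_mul,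
      hℓv, Complex.reCLM_apply, Complex.imCLM_apply, nsD_apply]
    ring
  unfold lap
  rw [key 1, key Complex.I]
  simp [Complex.one_re, Complex.one_im, Complex.I_re, Complex.I_im, Complex.normSq_apply]
  ring

lemma lap_const_zero (z : ℂ) : lap (fun _ => (0:ℝ)) z = 0 := by
  unfold lap
  have h : (fun w : ℂ => fderiv ℝ (fun _ : ℂ => (0:ℝ)) w) = fun _ => 0 := by
    funext w; exact fderiv_const_apply 0
  simp [h]

/-- 1D second derivative test at a local max. -/
lemma second_deriv_nonpos_at_max {g g₁ : ℝ → ℝ} {L : ℝ}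
    (hmax : IsLocalMax g 0)
    (hg : ∀ᶠ t in 𝓝 (0:ℝ), HasDerivAt g (g₁ t) t)
    (h2 : HasDerivAt g₁ L 0) : L ≤ 0 := by
  by_contra hL
  push_neg at hL
  have hg10 : g₁ 0 = 0 := hmax.hasDerivAt_eq_zero hg.self_of_nhds
  have hslope : Tendsto (slope g₁ 0) (𝓝[≠] (0:ℝ)) (𝓝 L) :=
    hasDerivAt_iff_tendsto_slope.mp h2
  have hpos : ∀ᶠ t in 𝓝[≠] (0:ℝ), 0 < slope g₁ 0 t :=
    hslope.eventually (eventually_gt_nhds hL)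
  -- get a ball where everything holds
  have hall : ∀ᶠ t in 𝓝 (0:ℝ), HasDerivAt g (g₁ t) t ∧ g t ≤ g 0 := hg.and hmax
  obtain ⟨δ₁, hδ₁, h₁⟩ := Metric.eventually_nhds_iff.mp hall
  have hpos' : ∀ᶠ t in 𝓝 (0:ℝ), t ∈ ({(0:ℝ)}ᶜ : Set ℝ) → 0 < slope g₁ 0 t :=
    eventually_nhdsWithin_iff.mp hpos
  obtain ⟨δ₂, hδ₂, h₂'⟩ := Metric.eventually_nhds_iff.mp hpos'
  set t := min δ₁ δ₂ / 2 with ht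
  have ht0 : 0 < t := by positivity
  have htδ₁ : t < δ₁ := by
    have : min δ₁ δ₂ ≤ δ₁ := min_le_left _ _
    simp only [ht]; linarith
  have htδ₂ : t < δ₂ := by
    have : min δ₁ δ₂ ≤ δ₂ := min_le_right _ _
    simp only [ht]; linarith
  have hsub : ∀ x ∈ Icc (0:ℝ) t, dist x 0 < δ₁ := by
    intro x hx
    rw [Real.dist_eq, sub_zero, _root_.abs_of_nonneg hx.1]
    linarith [hx.2]
  have hderiv : ∀ x ∈ Ioo (0:ℝ) t, HasDerivAt g (g₁ x) x := fun x hx =>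
    (h₁ (hsub x ⟨le_of_lt hx.1, le_of_lt hx.2⟩)).1
  have hcont : ContinuousOn g (Icc (0:ℝ) t) := fun x hx =>
    ((h₁ (hsub x hx)).1.continuousAt).continuousWithinAt
  obtain ⟨c, hc, hceq⟩ := exists_hasDerivAt_eq_slope g g₁ ht0 hcont hderiv
  have hle : g₁ c ≤ 0 := by
    rw [hceq]
    apply div_nonpos_of_nonpos_of_nonneg
    · have := (h₁ (hsub t ⟨le_of_lt ht0, le_refl t⟩)).2
      have h00 : g 0 ≤ g 0 := le_refl _
      linarith [this]
    · linarith [ht0]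
  have hcpos : 0 < slope g₁ 0 c := by
    apply h₂'
    · rw [Real.dist_eq, sub_zero, _root_.abs_of_nonneg (le_of_lt hc.1)]
      linarith [hc.2]
    · exact Set.mem_compl_singleton_iff.mpr (ne_of_gt hc.1)
  rw [slope_def_field] at hcpos
  have : 0 < g₁ c := by
    have hc0 : 0 < c := hc.1
    have := hcpos
    rw [div_pos_iff] at this
    rcases this with ⟨h, _⟩ | ⟨h, hneg⟩
    · simpa [hg10] using h
    · simp [hg10] at h hneg; linarith
  linarith

lemma lap_nonpos_of_isLocalMax {u : ℂ → ℝ} {z : ℂ}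
    (hu : ContDiffAt ℝ 2 u z) (hm : IsLocalMax u z) : lap u z ≤ 0 := by
  have hF : DifferentiableAt ℝ (fderiv ℝ u) z :=
    (hu.fderiv_right (m := 1) (le_refl (2 : WithTop ℕ∞))).differentiableAt one_ne_zero
  have hud : ∀ᶠ w in 𝓝 z, HasFDerivAt u (fderiv ℝ u w) w := by
    filter_upwards [hu.eventually (by simp)] with w hw
    exact (hw.differentiableAt two_ne_zero).hasFDerivAt
  have key : ∀ v : ℂ, fderiv ℝ (fun w => fderiv ℝ u w v) z v ≤ 0 := by
    intro v
    set ℓ : ℝ → ℂ := fun t => z + t • v with hℓ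
    have hℓ0 : ℓ 0 = z := by simp [hℓ]
    have hℓd : ∀ t : ℝ, HasDerivAt ℓ v t := by
      intro t
      have h1 : HasDerivAt (fun t : ℝ => t • v) ((1:ℝ) • v) t :=
        (hasDerivAt_id t).smul_const v
      simpa [hℓ, one_smul] using h1.const_add z
    have hℓc : Continuous ℓ := by
      apply continuous_const.add (continuous_id.smul continuous_const)
    have hℓt : Tendsto ℓ (𝓝 0) (𝓝 z) := by
      rw [← hℓ0]; exact hℓc.tendsto 0
    set g : ℝ → ℝ := fun t => u (ℓ t) with hgdef
    set g₁ : ℝ → ℝ := fun t => fderiv ℝ u (ℓ t) v with hg1def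
    have hmax : IsLocalMax g 0 := by
      have := hℓt.eventually hm
      filter_upwards [this] with t ht
      simpa [hgdef, hℓ0] using ht
    have hg : ∀ᶠ t in 𝓝 (0:ℝ), HasDerivAt g (g₁ t) t := by
      filter_upwards [hℓt.eventually hud] with t ht
      exact ht.comp_hasDerivAt t (hℓd t)
    have hA : DifferentiableAt ℝ (fun w => fderiv ℝ u w v) z :=
      hF.clm_apply (differentiableAt_const v)
    have h2 : HasDerivAt g₁ (fderiv ℝ (fun w => fderiv ℝ u w v) z v) 0 := by
      have hA' : HasFDerivAt (fun w => fderiv ℝ u w v)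
          (fderiv ℝ (fun w => fderiv ℝ u w v) z) (ℓ 0) := by
        rw [hℓ0]; exact hA.hasFDerivAt
      have := hA'.comp_hasDerivAt 0 (hℓd 0)
      exact this
    exact second_deriv_nonpos_at_max hmax hg h2
  have h1 := key 1
  have hI := key Complex.I
  unfold lap
  linarith

lemma isOpen_unitDisk : IsOpen unitDisk :=
  isOpen_lt continuous_norm continuous_const

set_option maxHeartbeats 2000000 in
lemma ahlfors_bound {lam : ℂ → ℝ} (h : IsConfPseudometric lam)
    (hcurv : ∀ w ∈ unitDisk, 0 < lam w → curv lam w ≤ -4)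
    {z : ℂ} (hz : z ∈ unitDisk) : lam z ≤ 1 / (1 - ‖z‖ ^ 2) := by
  have haz : ‖z‖ < 1 := hz
  have habs0 : (0:ℝ) ≤ ‖z‖ := norm_nonneg z
  have hnz : Complex.normSq z < 1 := by
    rw [← Complex.sq_norm]; nlinarith
  have main : ∀ r : ℝ, ‖z‖ < r → r < 1 →
      lam z * (r ^ 2 - Complex.normSq z) ≤ r := by
    intro r hr1 hr2
    have hr0 : 0 < r := lt_of_le_of_lt habs0 hr1
    have hnzr : Complex.normSq z < r ^ 2 := by
      rw [← Complex.sq_norm]; nlinarith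
    have hlz0 : 0 ≤ lam z := h.nonneg z hz
    by_cases hlz : lam z ≤ 0
    · nlinarith
    push_neg at hlz
    set K := Metric.closedBall (0 : ℂ) r with hK
    have hKsub : K ⊆ unitDisk := by
      intro w hw
      simp only [hK, Metric.mem_closedBall, Complex.dist_eq, sub_zero] at hw
      exact lt_of_le_of_lt hw hr2
    have hKc : IsCompact K := isCompact_closedBall _ _
    have hcontK : ContinuousOn (fun w => lam w * (r ^ 2 - Complex.normSq w)) K :=
      (h.cont.mono hKsub).mul
        ((continuous_const.sub contDiff_normSq'.continuous).continuousOn)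
    have hKne : K.Nonempty := ⟨0, by simp [hK, hr0.le]⟩
    obtain ⟨w₀, hw₀K, hw₀max⟩ := hKc.exists_isMaxOn hKne hcontK
    have hzK : z ∈ K := by
      simp only [hK, Metric.mem_closedBall, Complex.dist_eq, sub_zero]
      exact hr1.le
    have hmaxz : lam z * (r ^ 2 - Complex.normSq z)
        ≤ lam w₀ * (r ^ 2 - Complex.normSq w₀) := hw₀max hzK
    have hhz : 0 < lam z * (r ^ 2 - Complex.normSq z) := by nlinarith
    have hh0 : 0 < lam w₀ * (r ^ 2 - Complex.normSq w₀) := lt_of_lt_of_le hhz hmaxz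
    have hw₀D : w₀ ∈ unitDisk := hKsub hw₀K
    have hlam₀0 : 0 ≤ lam w₀ := h.nonneg w₀ hw₀D
    have hn₀ : Complex.normSq w₀ < r ^ 2 := by nlinarith
    have hlam₀ : 0 < lam w₀ := by nlinarith
    have hw₀ball : w₀ ∈ Metric.ball (0 : ℂ) r := by
      simp only [Metric.mem_ball, Complex.dist_eq, sub_zero]
      have := Complex.sq_norm w₀
      nlinarith [norm_nonneg w₀]
    have hOpenPos : IsOpen {w : ℂ | w ∈ unitDisk ∧ 0 < lam w} := by
      have : {w : ℂ | w ∈ unitDisk ∧ 0 < lam w} = unitDisk ∩ lam ⁻¹' (Ioi 0) := by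
        ext w; simp [Set.mem_Ioi]
      rw [this]
      exact h.cont.isOpen_inter_preimage isOpen_unitDisk isOpen_Ioi
    have hlamCD : ContDiffAt ℝ 2 lam w₀ :=
      h.smooth.contDiffAt (hOpenPos.mem_nhds ⟨hw₀D, hlam₀⟩)
    have hflog : ContDiffAt ℝ 2 (fun w => Real.log (lam w)) w₀ :=
      hlamCD.log (ne_of_gt hlam₀)
    set n₀ := Complex.normSq w₀ with hn₀def
    have hs₀ : 0 < r ^ 2 - n₀ := by linarith
    set φ : ℝ → ℝ := fun t => Real.log (r ^ 2 - t) with hφ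
    set φ' : ℝ → ℝ := fun t => -(r ^ 2 - t)⁻¹ with hφ'
    have h1 : ∀ᶠ t in 𝓝 n₀, HasDerivAt φ (φ' t) t := by
      filter_upwards [Iio_mem_nhds (show n₀ < r ^ 2 by linarith)] with t ht
      have hne : r ^ 2 - t ≠ 0 := by
        simp only [Set.mem_Iio] at ht; intro hc; nlinarith [sub_pos.mpr ht]
      have hd : HasDerivAt (fun t : ℝ => r ^ 2 - t) (-1) t :=
        (hasDerivAt_id t).const_sub (r ^ 2)
      have := hd.log hne
      convert this using 1
      simp [hφ']
      field_simp
    have h2 : HasDerivAt φ' (-((r ^ 2 - n₀) ^ 2)⁻¹) n₀ := by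
      have hd : HasDerivAt (fun t : ℝ => r ^ 2 - t) (-1) n₀ :=
        (hasDerivAt_id n₀).const_sub (r ^ 2)
      have := (hd.inv (ne_of_gt hs₀)).neg
      refine this.congr_deriv ?_
      ring
    set u : ℂ → ℝ := fun w => Real.log (lam w) + φ (Complex.normSq w) with hu
    have hradCD : ContDiffAt ℝ 2 (fun w : ℂ => φ (Complex.normSq w)) w₀ := by
      have hbase : ContDiffAt ℝ 2 (fun w : ℂ => r ^ 2 - Complex.normSq w) w₀ :=
        (contDiff_const.sub (contDiff_normSq'.of_le le_top)).contDiffAt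
      exact hbase.log (ne_of_gt hs₀)
    have hucd : ContDiffAt ℝ 2 u w₀ := hflog.add hradCD
    have humax : IsLocalMax u w₀ := by
      have hball : Metric.ball (0 : ℂ) r ∈ 𝓝 w₀ := Metric.isOpen_ball.mem_nhds hw₀ball
      have hcontat : ContinuousAt lam w₀ :=
        h.cont.continuousAt (isOpen_unitDisk.mem_nhds hw₀D)
      have hpos : ∀ᶠ w in 𝓝 w₀, 0 < lam w :=
        hcontat.eventually (eventually_gt_nhds hlam₀)
      have hns : ∀ᶠ w in 𝓝 w₀, Complex.normSq w < r ^ 2 :=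
        (contDiff_normSq'.continuous.continuousAt).eventually (eventually_lt_nhds hn₀)
      filter_upwards [hball, hpos, hns] with w hwb hwp hwn
      have hle : lam w * (r ^ 2 - Complex.normSq w) ≤ lam w₀ * (r ^ 2 - n₀) :=
        hw₀max (Metric.ball_subset_closedBall hwb)
      have hwspos : 0 < r ^ 2 - Complex.normSq w := by linarith
      have hlog := Real.log_le_log (by positivity) hle
      rw [Real.log_mul (ne_of_gt hwp) (ne_of_gt hwspos),
        Real.log_mul (ne_of_gt hlam₀) (ne_of_gt hs₀)] at hlog
      simpa [hu, hφ] using hlog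
    have hlapu : lap u w₀ ≤ 0 := lap_nonpos_of_isLocalMax hucd humax
    have hlap := lap_add_radial (fun w => Real.log (lam w)) φ φ'
      (-((r ^ 2 - n₀) ^ 2)⁻¹) w₀ hflog h1 h2
    have hc := hcurv w₀ hw₀D hlam₀
    unfold curv at hc
    have hlam2 : 0 < lam w₀ ^ 2 := by positivity
    have hgein : 4 * lam w₀ ^ 2 ≤ lap (fun w => Real.log (lam w)) w₀ := by
      rw [div_le_iff₀ hlam2] at hc
      linarith
    have hrad : 4 * n₀ * (-((r ^ 2 - n₀) ^ 2)⁻¹) + 4 * φ' n₀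
        = -(4 * r ^ 2 / (r ^ 2 - n₀) ^ 2) := by
      simp only [hφ']
      field_simp
      ring
    have hkey : lap u w₀ = lap (fun w => Real.log (lam w)) w₀
        - 4 * r ^ 2 / (r ^ 2 - n₀) ^ 2 := by
      rw [hlap, hrad]; ring
    have hbound : 4 * lam w₀ ^ 2 ≤ 4 * r ^ 2 / (r ^ 2 - n₀) ^ 2 := by
      rw [hkey] at hlapu; linarith
    have hs₀2 : 0 < (r ^ 2 - n₀) ^ 2 := by positivity
    have hbound2 : lam w₀ ^ 2 * (r ^ 2 - n₀) ^ 2 ≤ r ^ 2 := by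
      rw [le_div_iff₀ hs₀2] at hbound
      nlinarith
    have hlamw₀ : lam w₀ * (r ^ 2 - n₀) ≤ r := by
      have h' : (lam w₀ * (r ^ 2 - n₀)) ^ 2 ≤ r ^ 2 := by rw [mul_pow]; exact hbound2
      by_contra hcon
      push_neg at hcon
      have h'' : r ^ 2 < (lam w₀ * (r ^ 2 - n₀)) ^ 2 := by nlinarith [hr0]
      linarith
    linarith [hmaxz]
  have hlim : Tendsto (fun r : ℝ => r / (r ^ 2 - Complex.normSq z)) (𝓝[<] (1:ℝ))
      (𝓝 (1 / (1 - Complex.normSq z))) := by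
    have hden : ContinuousAt (fun r : ℝ => r ^ 2 - Complex.normSq z) 1 :=
      ((continuous_pow 2).sub continuous_const).continuousAt
    have hne : (1:ℝ) ^ 2 - Complex.normSq z ≠ 0 := by
      rw [one_pow]; exact ne_of_gt (by linarith)
    have hct : ContinuousAt (fun r : ℝ => r / (r ^ 2 - Complex.normSq z)) 1 :=
      continuousAt_id.div hden hne
    have h0 := hct.tendsto.mono_left (nhdsWithin_le_nhds : 𝓝[<] (1:ℝ) ≤ 𝓝 1)
    simpa using h0
  have hev : ∀ᶠ r in 𝓝[<] (1:ℝ), lam z ≤ r / (r ^ 2 - Complex.normSq z) := by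
    filter_upwards [Ioo_mem_nhdsLT haz] with r hr
    have hd : 0 < r ^ 2 - Complex.normSq z := by
      rw [← Complex.sq_norm]
      nlinarith [hr.1, hr.2, habs0]
    rw [le_div_iff₀ hd]
    exact main r hr.1 hr.2
  have := ge_of_tendsto hlim hev
  rwa [Complex.sq_norm]

set_option maxHeartbeats 1000000 in
/-- The pseudometric `|w|^s / (1-|w|²)` belongs to the family. -/
lemma family_member (a s : ℝ) (ha : 0 < a) (hs : 0 < s) :
    IsConfPseudometric (fun w => ‖w‖ ^ s / (1 - ‖w‖ ^ 2))
    ∧ (∀ w ∈ unitDisk, 0 < (fun w => ‖w‖ ^ s / (1 - ‖w‖ ^ 2)) w →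
        curv (fun w => ‖w‖ ^ s / (1 - ‖w‖ ^ 2)) w ≤ -4)
    ∧ (fun w : ℂ => ‖w‖ ^ s / (1 - ‖w‖ ^ 2)) 0 ≤ a := by
  set lam : ℂ → ℝ := fun w => ‖w‖ ^ s / (1 - ‖w‖ ^ 2) with hlam
  have hlam0 : lam 0 = 0 := by
    simp [hlam, Real.zero_rpow (ne_of_gt hs)]
  have hdenpos : ∀ w : ℂ, w ∈ unitDisk → 0 < 1 - ‖w‖ ^ 2 := by
    intro w hw
    have : ‖w‖ < 1 := hw
    nlinarith [norm_nonneg w]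
  have hnum_cont : Continuous (fun w : ℂ => ‖w‖ ^ s) := by
    rw [continuous_iff_continuousAt]
    intro w
    exact (Real.continuousAt_rpow_const _ _ (Or.inr hs.le)).comp
      continuous_norm.continuousAt
  have hden_cont : Continuous (fun w : ℂ => 1 - ‖w‖ ^ 2) :=
    continuous_const.sub (continuous_norm.pow 2)
  have hconf : IsConfPseudometric lam := by
    constructor
    · exact hnum_cont.continuousOn.div hden_cont.continuousOn
        (fun w hw => ne_of_gt (hdenpos w hw))
    · intro w hw
      exact div_nonneg (Real.rpow_nonneg (norm_nonneg w) s) (hdenpos w hw).le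
    · -- smooth where positive
      intro w hw
      have hwne : w ≠ 0 := by
        intro h0
        rw [h0] at hw
        exact lt_irrefl 0 (hlam0 ▸ hw.2)
      have hwD : ‖w‖ < 1 := hw.1
      apply ContDiffAt.contDiffWithinAt
      have hnpos : 0 < Complex.normSq w := Complex.normSq_pos.mpr hwne
      have hN : ContDiffAt ℝ 2 Complex.normSq w := (contDiff_normSq'.of_le le_top).contDiffAt
      have habs : ContDiffAt ℝ 2 (fun w : ℂ => ‖w‖) w := by
        have h1 : ContDiffAt ℝ 2 (fun w : ℂ => Real.sqrt (Complex.normSq w)) w :=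
          (Real.contDiffAt_sqrt (ne_of_gt hnpos)).comp w hN
        have : (fun w : ℂ => Real.sqrt (Complex.normSq w)) = fun w : ℂ => ‖w‖ := by
          funext w; rw [Complex.norm_def]
        rwa [this] at h1
      have habsne : ‖w‖ ≠ 0 := by
        simpa using hwne
      have hnum : ContDiffAt ℝ 2 (fun w : ℂ => ‖w‖ ^ s) w :=
        (Real.contDiffAt_rpow_const_of_ne habsne).comp w habs
      have hden : ContDiffAt ℝ 2 (fun w : ℂ => 1 - ‖w‖ ^ 2) w :=
        contDiffAt_const.sub (habs.pow 2)
      exact hnum.div hden (ne_of_gt (hdenpos w hw.1))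
    -- done structure
  refine ⟨hconf, ?_, by rw [hlam0]; exact ha.le⟩
  intro w hw hpos
  have hwne : w ≠ 0 := by
    intro h0
    rw [h0] at hpos
    exact lt_irrefl 0 (hlam0 ▸ hpos)
  have hwD : ‖w‖ < 1 := hw
  have habs0 : 0 < ‖w‖ := norm_pos_iff.mpr hwne
  set n := Complex.normSq w with hn
  have h0n : 0 < n := Complex.normSq_pos.mpr hwne
  have hn1 : n < 1 := by
    rw [hn, ← Complex.sq_norm]; nlinarith
  set φ : ℝ → ℝ := fun t => s / 2 * Real.log t - Real.log (1 - t) with hφ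
  set φ' : ℝ → ℝ := fun t => s / 2 * t⁻¹ + (1 - t)⁻¹ with hφ'
  set p2 : ℝ := -(s / 2) * (n ^ 2)⁻¹ + ((1 - n) ^ 2)⁻¹ with hp2
  have h1 : ∀ᶠ t in 𝓝 n, HasDerivAt φ (φ' t) t := by
    filter_upwards [Ioo_mem_nhds h0n hn1] with t ht
    obtain ⟨ht0, ht1⟩ := ht
    have ha' : HasDerivAt (fun t => s / 2 * Real.log t) (s / 2 * t⁻¹) t :=
      (Real.hasDerivAt_log (ne_of_gt ht0)).const_mul (s / 2)
    have hb' : HasDerivAt (fun t : ℝ => Real.log (1 - t)) (-(1 - t)⁻¹) t := by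
      have hd : HasDerivAt (fun t : ℝ => 1 - t) (-1) t := (hasDerivAt_id t).const_sub 1
      have h1t : (1:ℝ) - t ≠ 0 := ne_of_gt (by linarith)
      have := hd.log h1t
      convert this using 1
      field_simp
    have := ha'.sub hb'
    refine this.congr_deriv ?_
    simp only [hφ']
    ring
  have h2 : HasDerivAt φ' p2 n := by
    have ha2 : HasDerivAt (fun t : ℝ => s / 2 * t⁻¹) (s / 2 * (-(n ^ 2)⁻¹)) n :=
      (hasDerivAt_inv (ne_of_gt h0n)).const_mul (s / 2)
    have hb2 : HasDerivAt (fun t : ℝ => (1 - t)⁻¹) (((1 - n) ^ 2)⁻¹) n := by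
      have hd : HasDerivAt (fun t : ℝ => 1 - t) (-1) n := (hasDerivAt_id n).const_sub 1
      have h1n : (1:ℝ) - n ≠ 0 := ne_of_gt (by linarith)
      have := hd.inv h1n
      refine this.congr_deriv ?_
      field_simp
    have := ha2.add hb2
    refine this.congr_deriv ?_
    simp only [hp2]
    ring
  -- log lam agrees with φ ∘ normSq near w
  have hev_open : ∀ᶠ w' in 𝓝 w, w' ≠ 0 ∧ ‖w'‖ < 1 := by
    have hopen : IsOpen {w' : ℂ | w' ≠ 0 ∧ ‖w'‖ < 1} :=
      (isOpen_compl_singleton).inter (isOpen_lt continuous_norm continuous_const)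
    exact hopen.mem_nhds ⟨hwne, hwD⟩
  have heq : (fun w' => Real.log (lam w')) =ᶠ[𝓝 w]
      (fun w' => (fun _ : ℂ => (0:ℝ)) w' + φ (Complex.normSq w')) := by
    filter_upwards [hev_open] with w' hw'
    obtain ⟨hw'ne, hw'D⟩ := hw'
    have ha' : 0 < ‖w'‖ := norm_pos_iff.mpr hw'ne
    have hd' : 0 < 1 - ‖w'‖ ^ 2 := by nlinarith
    have hnum' : 0 < ‖w'‖ ^ s := Real.rpow_pos_of_pos ha' s
    simp only [hlam, hφ, zero_add]
    rw [Real.log_div (ne_of_gt hnum') (ne_of_gt hd'), Real.log_rpow ha',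
      ← Complex.sq_norm, Real.log_pow]
    push_cast
    ring
  have hlapeq : lap (fun w' => Real.log (lam w')) w = 4 * n * p2 + 4 * φ' n := by
    rw [lap_congr heq, lap_add_radial (fun _ => (0:ℝ)) φ φ' p2 w contDiffAt_const h1 h2,
      lap_const_zero]
    simp [hn]
  have hval : 4 * n * p2 + 4 * φ' n = 4 / (1 - n) ^ 2 := by
    simp only [hp2, hφ']
    have h1n : (1:ℝ) - n ≠ 0 := ne_of_gt (by linarith)
    field_simp
    ring
  have hlam2 : lam w ^ 2 = n ^ s / (1 - n) ^ 2 := by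
    simp only [hlam]
    rw [div_pow]
    congr 1
    · rw [← Real.rpow_natCast (‖w‖ ^ s) 2, ← Real.rpow_mul (norm_nonneg w),
        hn, ← Complex.sq_norm, ← Real.rpow_natCast (‖w‖) 2,
        ← Real.rpow_mul (norm_nonneg w)]
      norm_num
      ring_nf
    · rw [hn, ← Complex.sq_norm]
  have hns0 : 0 < n ^ s := Real.rpow_pos_of_pos h0n s
  have hns1 : n ^ s ≤ 1 := Real.rpow_le_one (le_of_lt h0n) hn1.le hs.le
  have h1n : (0:ℝ) < (1 - n) ^ 2 := by nlinarith
  unfold curv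
  rw [hlapeq, hval, hlam2]
  rw [div_le_iff₀ (by positivity : (0:ℝ) < n ^ s / (1 - n) ^ 2)]
  have : -4 * (n ^ s / (1 - n) ^ 2) = -(4 * n ^ s / (1 - n) ^ 2) := by ring
  rw [this]
  apply neg_le_neg
  rw [div_le_div_iff₀ h1n h1n]
  nlinarith

/-- **No Ahlfors extension of the Golusin inequality.**
For `a ∈ (0,1]`, let `F_a` be the family of conformal pseudometrics `λ` on `𝔻` with
curvature `κ_λ ≤ -4` and `λ(0) ≤ a`.  Then `sup_{λ ∈ F_a} λ(z) = λ_𝔻(z) = 1/(1-|z|²)`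
for every `z ∈ 𝔻 \ {0}`. -/
theorem sup_pseudometric_family
    (a : ℝ) (ha : 0 < a) (ha1 : a ≤ 1)
    (z : ℂ) (hz : z ∈ unitDisk) (hz0 : z ≠ 0) :
    sSup {x : ℝ | ∃ lam : ℂ → ℝ, IsConfPseudometric lam ∧
        (∀ w ∈ unitDisk, 0 < lam w → curv lam w ≤ -4) ∧ lam 0 ≤ a ∧ x = lam z}
      = 1 / (1 - ‖z‖ ^ 2) := by
  have haz : ‖z‖ < 1 := hz
  have habs0 : 0 < ‖z‖ := norm_pos_iff.mpr hz0
  have hT : 0 < 1 / (1 - ‖z‖ ^ 2) := by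
    have : 0 < 1 - ‖z‖ ^ 2 := by nlinarith
    positivity
  apply csSup_eq_of_forall_le_of_forall_lt_exists_gt
  · -- nonempty: the zero pseudometric
    refine ⟨0, fun _ => 0, ⟨continuousOn_const, fun _ _ => le_refl 0, contDiffOn_const⟩,
      fun w _ h0 => absurd h0 (lt_irrefl 0), ha.le, rfl⟩
  · rintro x ⟨lam, hconf, hcurv, -, rfl⟩
    exact ahlfors_bound hconf hcurv hz
  · intro w hw
    -- choose s > 0 small with |z|^s * (1/(1-|z|²)) > w
    have hrc : ContinuousAt (fun s : ℝ => ‖z‖ ^ s) 0 :=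
      Real.continuousAt_const_rpow (ne_of_gt habs0)
    have htend : Tendsto (fun s : ℝ => ‖z‖ ^ s / (1 - ‖z‖ ^ 2))
        (𝓝[>] (0:ℝ)) (𝓝 (1 / (1 - ‖z‖ ^ 2))) := by
      have h0 : Tendsto (fun s : ℝ => ‖z‖ ^ s / (1 - ‖z‖ ^ 2))
          (𝓝 (0:ℝ)) (𝓝 (‖z‖ ^ (0:ℝ) / (1 - ‖z‖ ^ 2))) :=
        (hrc.div continuousAt_const (by nlinarith : (1:ℝ) - ‖z‖ ^ 2 ≠ 0))
      rw [Real.rpow_zero] at h0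
      exact h0.mono_left nhdsWithin_le_nhds
    have hev : ∀ᶠ s in 𝓝[>] (0:ℝ),
        w < ‖z‖ ^ s / (1 - ‖z‖ ^ 2) :=
      htend.eventually (eventually_gt_nhds hw)
    obtain ⟨s, hsw, hs0⟩ := (hev.and self_mem_nhdsWithin).exists
    obtain ⟨hconf, hcurv, h0a⟩ := family_member a s ha hs0
    exact ⟨‖z‖ ^ s / (1 - ‖z‖ ^ 2),
      ⟨_, hconf, hcurv, h0a, rfl⟩, hsw⟩
end
end

section
/- Let f : 𝔻 → 𝔻 be holomorphic with f(z) = z + o(|1-z|³) as z → 1 nontangentially (i.e. for every M > 1, (f(z)-z)/|1-z|³ → 0 as z → 1 with |1-z| ≤ M(1-|z|)). Then f^h(z) = 1 + o(|1-z|²) as z → 1 nontangentially (i.e. for every M > 1, (f^h(z)-1)/|1-z|² → 0 as z → 1 with |1-z| ≤ M(1-|z|)). -/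
open Complex Filter MeasureTheory Metric Set Topology

noncomputable section

/-- The Stolz angle at `1` with aperture `M`: `{z ∈ 𝔻 : |1-z| ≤ M(1-|z|)}`. -/
def stolz (M : ℝ) : Set ℂ :=
  {z : ℂ | z ∈ unitDisk ∧ ‖1 - z‖ ≤ M * (1 - ‖z‖)}

lemma cauchy_bound {g : ℂ → ℂ} {z : ℂ} {r K : ℝ} (hr : 0 < r) (hK : 0 < K)
    (hd : DifferentiableOn ℂ g (ball z r))
    (hb : ∀ w ∈ ball z r, ‖g w‖ ≤ K) :
    ‖deriv g z‖ ≤ 3 * K / r := by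
  have maps : MapsTo g (ball z r) (closedBall (g z) (3 * K)) := by
    intro w hw
    rw [mem_closedBall, dist_eq_norm]
    calc ‖g w - g z‖ ≤ ‖g w‖ + ‖g z‖ := norm_sub_le _ _
      _ ≤ K + K := add_le_add (hb w hw) (hb z (mem_ball_self hr))
      _ ≤ 3 * K := by linarith
  simpa using Complex.norm_deriv_le_div_of_mapsTo_ball hd maps hr

set_option maxHeartbeats 1000000 in
/-- **From Burns–Krantz-type asymptotics to Schwarz–Pick-type asymptotics.**
If `f : 𝔻 → 𝔻` is holomorphic and `f(z) = z + o(|1-z|³)` as `z → 1` nontangentially,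
then `f^h(z) = 1 + o(|1-z|²)` as `z → 1` nontangentially. -/
theorem nontangential_distortion_estimate
    (f : ℂ → ℂ) (hf : DifferentiableOn ℂ f unitDisk)
    (hmaps : Set.MapsTo f unitDisk unitDisk)
    (ho : ∀ M : ℝ, 1 < M →
      Tendsto (fun z => (f z - z) / ((‖1 - z‖ : ℂ)) ^ 3)
        (nhdsWithin 1 (stolz M)) (𝓝 0)) :
    ∀ M : ℝ, 1 < M →
      Tendsto (fun z => (fh f z - 1) / ‖1 - z‖ ^ 2)
        (nhdsWithin 1 (stolz M)) (𝓝 0) := by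
  intro M hM
  have hM0 : (0:ℝ) < M := by linarith
  rw [Metric.tendsto_nhdsWithin_nhds]
  intro ε hε
  set C : ℝ := 2 * M * (96 * M + 16) + 1 with hC_def
  have hC : 1 < C := by nlinarith
  set ε₁ : ℝ := min (1 / (32 * M)) (ε / C) with hε₁_def
  have hε₁ : 0 < ε₁ := by
    apply lt_min (by positivity) (by positivity)
  obtain ⟨η, hη, hball⟩ := Metric.tendsto_nhdsWithin_nhds.mp (ho (4 * M) (by linarith)) ε₁ hε₁
  refine ⟨min (η / 2) 1, by positivity, ?_⟩
  intro z hz hdz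
  -- basic facts about z
  have hz1 : ‖z‖ < 1 := hz.1
  have hzs : ‖1 - z‖ ≤ M * (1 - ‖z‖) := hz.2
  set a : ℝ := ‖1 - z‖ with ha_def
  have hdz1 : dist z 1 = a := by
    rw [Complex.dist_eq, ha_def, norm_sub_rev]
  have hzne : z ≠ 1 := by intro h; rw [h] at hz1; simp at hz1
  have ha0 : 0 < a := norm_pos_iff.mpr (sub_ne_zero.mpr (Ne.symm hzne))
  have ha1 : a < 1 := by
    have := hdz.trans_le (min_le_right _ _)
    rwa [hdz1] at this
  have haη : a < η / 2 := by
    have := hdz.trans_le (min_le_left _ _)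
    rwa [hdz1] at this
  have haM : a / M ≤ 1 - ‖z‖ := by
    rw [div_le_iff₀ hM0]; linarith [hzs]
  -- the radius
  set r : ℝ := a / (2 * M) with hr_def
  have hr : 0 < r := by positivity
  -- properties of points in the ball
  have hball_props : ∀ w ∈ ball z r, w ∈ stolz (4 * M) ∧ ‖1 - w‖ ≤ 2 * a
      ∧ dist w 1 < η := by
    intro w hw
    rw [mem_ball, Complex.dist_eq] at hw
    have h1w : ‖1 - w‖ ≤ a + ‖w - z‖ := by
      calc ‖1 - w‖ = ‖(1 - z) + (z - w)‖ := by
            congr 1; ring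
        _ ≤ ‖1 - z‖ + ‖z - w‖ := norm_add_le _ _
        _ = a + ‖w - z‖ := by rw [norm_sub_rev z w, ← ha_def]
    have hr2 : r ≤ a / 2 := by
      rw [hr_def]; apply div_le_div_of_nonneg_left ha0.le (by linarith) (by linarith)
    have h2a : ‖1 - w‖ ≤ 2 * a := by
      have := hw.le.trans hr2
      linarith [h1w]
    have hwz : ‖w‖ ≤ ‖z‖ + ‖w - z‖ := by
      calc ‖w‖ = ‖z + (w - z)‖ := by congr 1; ring
        _ ≤ _ := norm_add_le _ _
    have h1mw : a / (2 * M) < 1 - ‖w‖ := by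
      have : ‖w‖ < ‖z‖ + r := by linarith [hwz, hw]
      have h2 : 1 - ‖w‖ > (1 - ‖z‖) - r := by linarith
      have h3 : (1 - ‖z‖) - r ≥ a / M - a / (2 * M) := by linarith [haM]
      have h4 : a / M - a / (2 * M) = a / (2 * M) := by field_simp; ring
      linarith
    have hw1 : ‖w‖ < 1 := by
      have : 0 < a / (2 * M) := hr
      linarith
    refine ⟨⟨hw1, ?_⟩, h2a, ?_⟩
    · calc ‖1 - w‖ ≤ 2 * a := h2a
        _ = 4 * M * (a / (2 * M)) := by field_simp; ring
        _ ≤ 4 * M * (1 - ‖w‖) := by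
            apply mul_le_mul_of_nonneg_left h1mw.le (by linarith)
    · rw [Complex.dist_eq, norm_sub_rev]
      calc ‖1 - w‖ ≤ 2 * a := h2a
        _ < η := by linarith
  -- bound on f w - w in the ball
  have hbound : ∀ w ∈ ball z r, ‖f w - w‖ ≤ ε₁ * (2 * a) ^ 3 := by
    intro w hw
    obtain ⟨hws, h2a, hwη⟩ := hball_props w hw
    have hw1 : w ≠ 1 := by
      intro h; rw [h] at hws; simpa [unitDisk] using hws.1
    have h1w0 : 0 < ‖1 - w‖ := norm_pos_iff.mpr (sub_ne_zero.mpr (Ne.symm hw1))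
    have := hball hws hwη
    rw [dist_zero_right, norm_div, norm_pow, Complex.norm_real, norm_norm] at this
    have h1 : ‖f w - w‖ < ε₁ * ‖1 - w‖ ^ 3 := by
      rwa [div_lt_iff₀ (by positivity)] at this
    calc ‖f w - w‖ ≤ ε₁ * ‖1 - w‖ ^ 3 := h1.le
      _ ≤ ε₁ * (2 * a) ^ 3 := by
          apply mul_le_mul_of_nonneg_left _ hε₁.le
          apply pow_le_pow_left₀ (norm_nonneg _) h2a
  -- Cauchy estimate for deriv f z - 1
  have hsub : ball z r ⊆ unitDisk := fun w hw => (hball_props w hw).1.1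
  have hdiff : DifferentiableOn ℂ (fun w => f w - w) (ball z r) :=
    (hf.mono hsub).sub differentiableOn_id
  have hK : (0:ℝ) < ε₁ * (2 * a) ^ 3 := by positivity
  have hcb := cauchy_bound hr hK hdiff hbound
  have hzU : z ∈ unitDisk := hz.1
  have hfz_diff : DifferentiableAt ℂ f z := hf.differentiableAt (isOpen_unitDisk.mem_nhds hzU)
  have hderiv_eq : deriv (fun w => f w - w) z = deriv f z - 1 := by
    have := (hfz_diff.hasDerivAt.sub (hasDerivAt_id z)).deriv
    exact this
  rw [hderiv_eq] at hcb
  have hcb' : ‖deriv f z - 1‖ ≤ 48 * M * ε₁ * a ^ 2 := by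
    have heq : 3 * (ε₁ * (2 * a) ^ 3) / r = 48 * M * ε₁ * a ^ 2 := by
      rw [hr_def]; field_simp; ring
    linarith [hcb, heq.le]
  -- abbreviations
  set A : ℝ := ‖z‖ with hA_def
  set B : ℝ := ‖f z‖ with hB_def
  set d : ℝ := ‖deriv f z‖ with hd_def
  set s : ℝ := 1 - A ^ 2 with hs_def
  set t : ℝ := 1 - B ^ 2 with ht_def
  have hA0 : 0 ≤ A := norm_nonneg z
  have hB0 : 0 ≤ B := norm_nonneg (f z)
  have hB1 : B < 1 := hmaps hzU
  have hd1 : |d - 1| ≤ 48 * M * ε₁ * a ^ 2 := by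
    have := abs_norm_sub_norm_le (deriv f z) 1
    simp only [norm_one] at this
    exact this.trans hcb'
  have hfzz : ‖f z - z‖ ≤ ε₁ * (2 * a) ^ 3 :=
    hbound z (mem_ball_self hr)
  have hBA : |B - A| ≤ ε₁ * (2 * a) ^ 3 := by
    have := abs_norm_sub_norm_le (f z) z
    exact this.trans hfzz
  have hts : |t - s| ≤ 16 * ε₁ * a ^ 3 := by
    have h1 : t - s = (A - B) * (A + B) := by rw [ht_def, hs_def]; ring
    rw [h1, abs_mul]
    have h2 : |A - B| ≤ ε₁ * (2*a)^3 := by rw [abs_sub_comm]; exact hBA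
    have h3 : |A + B| ≤ 2 := by rw [_root_.abs_of_nonneg (by linarith : (0:ℝ) ≤ A + B)]; linarith
    calc |A - B| * |A + B| ≤ (ε₁ * (2*a)^3) * 2 :=
          mul_le_mul h2 h3 (abs_nonneg _) (by positivity)
      _ = 16 * ε₁ * a ^ 3 := by ring
  have h1A : 1 - A ≤ a := by
    have := abs_norm_sub_norm_le (1:ℂ) z
    simp only [norm_one] at this
    calc 1 - A ≤ |1 - A| := le_abs_self _
      _ ≤ a := this
  have hs_lb : a / M ≤ s := by
    have : 1 - A ≤ s := by rw [hs_def]; nlinarith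
    linarith [haM]
  have hs_ub : s ≤ 2 * a := by rw [hs_def]; nlinarith
  have hε₁M : ε₁ ≤ 1 / (32 * M) := min_le_left _ _
  have ht_lb : a / (2 * M) ≤ t := by
    have h1 : 16 * ε₁ * a ^ 3 ≤ a / (2 * M) := by
      have : 16 * ε₁ * a ^ 3 ≤ 16 * (1 / (32 * M)) * a ^ 3 := by nlinarith [pow_pos ha0 3]
      have h2 : 16 * (1 / (32 * M)) * a ^ 3 = a ^ 3 / (2 * M) := by field_simp; ring
      have h3 : a ^ 3 / (2 * M) ≤ a / (2 * M) := by
        gcongr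
        nlinarith
      linarith
    have h2 : s - |t - s| ≤ t := by
      have h3 : s - t ≤ |t - s| := by rw [abs_sub_comm]; exact le_abs_self _
      linarith
    have h4 : a / M - a / (2 * M) = a / (2 * M) := by field_simp; ring
    linarith [hts, hs_lb]
  have ht0 : 0 < t := lt_of_lt_of_le hr ht_lb
  -- the key estimate
  have hkey : |s * d - t| ≤ (96 * M + 16) * ε₁ * a ^ 3 := by
    have h1 : s * d - t = s * (d - 1) + (s - t) := by ring
    rw [h1]
    calc |s * (d - 1) + (s - t)| ≤ |s * (d - 1)| + |s - t| := abs_add_le _ _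
      _ = s * |d - 1| + |t - s| := by
          rw [abs_mul, _root_.abs_of_nonneg
            (le_of_lt (lt_of_lt_of_le (by positivity) hs_lb)), abs_sub_comm s t]
      _ ≤ 2 * a * (48 * M * ε₁ * a ^ 2) + 16 * ε₁ * a ^ 3 := by
          apply add_le_add _ hts
          apply mul_le_mul hs_ub hd1 (abs_nonneg _) (by positivity)
      _ = (96 * M + 16) * ε₁ * a ^ 3 := by ring
  -- conclude
  have hfh0 : fh f z = s * d / t := rfl
  have hfh : fh f z - 1 = (s * d - t) / t := by
    rw [hfh0]; field_simp
  rw [dist_zero_right, Real.norm_eq_abs, hfh, abs_div, abs_div,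
    _root_.abs_of_pos ht0, _root_.abs_of_pos (by positivity : (0:ℝ) < a ^ 2)]
  have hfinal : |s * d - t| / t / a ^ 2 ≤ 2 * M * (96 * M + 16) * ε₁ := by
    rw [div_div]
    have hden : a ^ 3 / (2 * M) ≤ t * a ^ 2 := by
      have : a / (2 * M) * a ^ 2 ≤ t * a ^ 2 := by nlinarith [ht_lb, sq_nonneg a]
      calc a ^ 3 / (2 * M) = a / (2 * M) * a ^ 2 := by ring
        _ ≤ t * a ^ 2 := this
    calc |s * d - t| / (t * a ^ 2) ≤ ((96 * M + 16) * ε₁ * a ^ 3) / (a ^ 3 / (2 * M)) := by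
          apply div_le_div₀ (by positivity) hkey (by positivity) hden
      _ = 2 * M * (96 * M + 16) * ε₁ := by field_simp
  have hε₁C : ε₁ ≤ ε / C := min_le_right _ _
  have hCm : 2 * M * (96 * M + 16) = C - 1 := by rw [hC_def]; ring
  have : 2 * M * (96 * M + 16) * ε₁ < ε := by
    rw [hCm]
    have h1 : (C - 1) * ε₁ ≤ (C - 1) * (ε / C) :=
      mul_le_mul_of_nonneg_left hε₁C (by linarith)
    have hC0 : (0:ℝ) < C := by linarith
    have h2 : (C - 1) * (ε / C) < ε := by
      have he : (C - 1) * (ε / C) = ε - ε / C := by field_simp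
      have hp : 0 < ε / C := by positivity
      rw [he]; linarith
    exact lt_of_le_of_lt h1 h2
  linarith [hfinal]
end
end

section
/- Let c ≥ 4 and r ∈ (0,1), and define v_r : 𝔻 → ℝ by v_r(z) := (1-|z|²)^{c/2} · e^{(1-|z|²)/r²}. Then for all z with r ≤ |z| < 1: Δv_r(z) ≥ (2c/(1-|z|²)²) · v_r(z), where Δ is the Laplacian. -/
open Complex Filter MeasureTheory Metric Set Topology

noncomputable section

/-! Auxiliary machinery -/

/-- The radial profile. -/
def Fv (c r t : ℝ) : ℝ := (1 - t) ^ (c / 2) * Real.exp ((1 - t) / r ^ 2)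

/-- Its first derivative. -/
def Fv1 (c r t : ℝ) : ℝ :=
  -((1 - t) ^ (c / 2 - 1) * Real.exp ((1 - t) / r ^ 2) * (c / 2 + (1 - t) / r ^ 2))

/-- Its second derivative. -/
def Fv2 (c r t : ℝ) : ℝ :=
  (1 - t) ^ (c / 2 - 2) * Real.exp ((1 - t) / r ^ 2) *
    ((c / 2 - 1) * (c / 2 + (1 - t) / r ^ 2) +
      (1 - t) / r ^ 2 * (c / 2 + (1 - t) / r ^ 2) + (1 - t) / r ^ 2)

lemma hasDerivAt_sub_self (t : ℝ) : HasDerivAt (fun t : ℝ => 1 - t) (-1) t := by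
  simpa using (hasDerivAt_id t).const_sub 1

lemma hasDerivAt_Fv {c r t : ℝ} (ht : t < 1) : HasDerivAt (Fv c r) (Fv1 c r t) t := by
  have hs : (0:ℝ) < 1 - t := by linarith
  have h1 := hasDerivAt_sub_self t
  have h2 : HasDerivAt (fun t : ℝ => (1 - t) ^ (c / 2))
      ((c / 2 * (1 - t) ^ (c / 2 - 1)) * (-1)) t :=
    (Real.hasDerivAt_rpow_const (Or.inl hs.ne')).comp t h1
  have h3 : HasDerivAt (fun t : ℝ => (1 - t) / r ^ 2) (-1 / r ^ 2) t := h1.div_const _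
  have h4 : HasDerivAt (fun t : ℝ => Real.exp ((1 - t) / r ^ 2))
      (Real.exp ((1 - t) / r ^ 2) * (-1 / r ^ 2)) t := h3.exp
  have h5 := h2.mul h4
  have key : (1 - t) ^ (c / 2) = (1 - t) ^ (c / 2 - 1) * (1 - t) := by
    rw [← Real.rpow_add_one hs.ne' (c / 2 - 1)]; norm_num
  refine h5.congr_deriv ?_
  rw [Fv1, key]; ring

lemma hasDerivAt_Fv1 {c r t : ℝ} (ht : t < 1) : HasDerivAt (Fv1 c r) (Fv2 c r t) t := by
  have hs : (0:ℝ) < 1 - t := by linarith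
  have h1 := hasDerivAt_sub_self t
  have hg : HasDerivAt (fun t : ℝ => (1 - t) ^ (c / 2 - 1))
      (((c / 2 - 1) * (1 - t) ^ (c / 2 - 1 - 1)) * (-1)) t :=
    (Real.hasDerivAt_rpow_const (Or.inl hs.ne')).comp t h1
  have h3 : HasDerivAt (fun t : ℝ => (1 - t) / r ^ 2) (-1 / r ^ 2) t := h1.div_const _
  have h4 : HasDerivAt (fun t : ℝ => Real.exp ((1 - t) / r ^ 2))
      (Real.exp ((1 - t) / r ^ 2) * (-1 / r ^ 2)) t := h3.exp
  have ha : HasDerivAt (fun t : ℝ => c / 2 + (1 - t) / r ^ 2) (-1 / r ^ 2) t :=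
    h3.const_add _
  have h5 := ((hg.mul h4).mul ha).neg
  have key : (1 - t) ^ (c / 2 - 1) = (1 - t) ^ (c / 2 - 2) * (1 - t) := by
    rw [← Real.rpow_add_one hs.ne' (c / 2 - 2)]; congr 1; ring
  have key2 : c / 2 - 1 - 1 = c / 2 - 2 := by ring
  refine h5.congr_deriv ?_
  simp only [Pi.mul_apply]
  rw [Fv2, key, key2]; ring

/-- `n w = |w|²` in coordinates. -/
def nsq (w : ℂ) : ℝ := w.re * w.re + w.im * w.im

/-- The derivative of `nsq`. -/
def nsqD (w : ℂ) : ℂ →L[ℝ] ℝ :=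
  (w.re • Complex.reCLM + w.re • Complex.reCLM) +
  (w.im • Complex.imCLM + w.im • Complex.imCLM)

lemma hasFDerivAt_nsq (w : ℂ) : HasFDerivAt nsq (nsqD w) w := by
  have hre : HasFDerivAt (fun w : ℂ => w.re) (Complex.reCLM : ℂ →L[ℝ] ℝ) w :=
    Complex.reCLM.hasFDerivAt
  have him : HasFDerivAt (fun w : ℂ => w.im) (Complex.imCLM : ℂ →L[ℝ] ℝ) w :=
    Complex.imCLM.hasFDerivAt
  exact (hre.mul hre).add (him.mul him)

lemma nsqD_one (w : ℂ) : nsqD w 1 = 2 * w.re := by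
  simp [nsqD]; ring

lemma nsqD_I (w : ℂ) : nsqD w Complex.I = 2 * w.im := by
  simp [nsqD]; ring

lemma hasFDerivAt_u {c r : ℝ} {w : ℂ} (hw : nsq w < 1) :
    HasFDerivAt (fun w => Fv c r (nsq w)) (Fv1 c r (nsq w) • nsqD w) w :=
  (hasDerivAt_Fv hw).comp_hasFDerivAt w (hasFDerivAt_nsq w)

lemma fderiv_u_eq {c r : ℝ} {w : ℂ} (hw : nsq w < 1) (e : ℂ) :
    fderiv ℝ (fun w => Fv c r (nsq w)) w e = Fv1 c r (nsq w) * nsqD w e := by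
  rw [(hasFDerivAt_u hw).fderiv]; simp

lemma isOpen_nsq_lt : IsOpen {w : ℂ | nsq w < 1} := by
  have : Continuous nsq := by
    exact ((Complex.continuous_re.mul Complex.continuous_re).add
      (Complex.continuous_im.mul Complex.continuous_im))
  exact isOpen_lt this continuous_const

/-- The Laplacian of the radial function. -/
lemma lap_u {c r : ℝ} {z : ℂ} (hz : nsq z < 1) :
    lap (fun w => Fv c r (nsq w)) z
      = (2 * Fv1 c r (nsq z) + 4 * z.re ^ 2 * Fv2 c r (nsq z)) +
        (2 * Fv1 c r (nsq z) + 4 * z.im ^ 2 * Fv2 c r (nsq z)) := by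
  have hmem : {w : ℂ | nsq w < 1} ∈ nhds z := isOpen_nsq_lt.mem_nhds hz
  have hA : HasFDerivAt (fun w => Fv1 c r (nsq w)) (Fv2 c r (nsq z) • nsqD z) z :=
    (hasDerivAt_Fv1 hz).comp_hasFDerivAt z (hasFDerivAt_nsq z)
  have hre : HasFDerivAt (fun w : ℂ => 2 * w.re) ((2:ℝ) • (Complex.reCLM : ℂ →L[ℝ] ℝ)) z :=
    Complex.reCLM.hasFDerivAt.const_mul 2
  have him : HasFDerivAt (fun w : ℂ => 2 * w.im) ((2:ℝ) • (Complex.imCLM : ℂ →L[ℝ] ℝ)) z :=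
    Complex.imCLM.hasFDerivAt.const_mul 2
  have hg1 : HasFDerivAt (fun w => Fv1 c r (nsq w) * (2 * w.re))
      (Fv1 c r (nsq z) • ((2:ℝ) • (Complex.reCLM : ℂ →L[ℝ] ℝ)) +
        (2 * z.re) • (Fv2 c r (nsq z) • nsqD z)) z := hA.mul hre
  have hg2 : HasFDerivAt (fun w => Fv1 c r (nsq w) * (2 * w.im))
      (Fv1 c r (nsq z) • ((2:ℝ) • (Complex.imCLM : ℂ →L[ℝ] ℝ)) +
        (2 * z.im) • (Fv2 c r (nsq z) • nsqD z)) z := hA.mul him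
  have e1 : (fun w => fderiv ℝ (fun w => Fv c r (nsq w)) w 1)
      =ᶠ[nhds z] (fun w => Fv1 c r (nsq w) * (2 * w.re)) := by
    filter_upwards [hmem] with w hw
    rw [fderiv_u_eq hw, nsqD_one]
  have e2 : (fun w => fderiv ℝ (fun w => Fv c r (nsq w)) w Complex.I)
      =ᶠ[nhds z] (fun w => Fv1 c r (nsq w) * (2 * w.im)) := by
    filter_upwards [hmem] with w hw
    rw [fderiv_u_eq hw, nsqD_I]
  rw [lap]
  rw [show (fun w => fderiv ℝ (fun w => Fv c r (nsq w)) w 1)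
      = fun w => fderiv ℝ (fun w => Fv c r (nsq w)) w 1 from rfl]
  rw [Filter.EventuallyEq.fderiv_eq e1, Filter.EventuallyEq.fderiv_eq e2,
    hg1.fderiv, hg2.fderiv]
  simp [nsqD_one, nsqD_I]
  ring

/-- **An explicit supersolution of the linearized curvature inequality.**
For `c ≥ 4` and `r ∈ (0,1)`, the function `v_r(z) = (1-|z|²)^{c/2}·e^{(1-|z|²)/r²}`
satisfies `Δv_r(z) ≥ (2c/(1-|z|²)²)·v_r(z)` on the annulus `r ≤ |z| < 1`. -/
theorem vr_supersolution
    (c r : ℝ) (hc : 4 ≤ c) (hr : 0 < r) (hr1 : r < 1) :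
    ∀ z : ℂ, r ≤ ‖z‖ → ‖z‖ < 1 →
      2 * c / (1 - ‖z‖ ^ 2) ^ 2 *
          ((1 - ‖z‖ ^ 2) ^ (c / 2) * Real.exp ((1 - ‖z‖ ^ 2) / r ^ 2))
        ≤ lap (fun w => (1 - ‖w‖ ^ 2) ^ (c / 2) *
            Real.exp ((1 - ‖w‖ ^ 2) / r ^ 2)) z := by
  intro z hz1 hz2
  have habs : ∀ w : ℂ, ‖w‖ ^ 2 = nsq w := by
    intro w; rw [Complex.sq_norm, Complex.normSq_apply]; rfl
  have hfun : (fun w => (1 - ‖w‖ ^ 2) ^ (c / 2) *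
      Real.exp ((1 - ‖w‖ ^ 2) / r ^ 2)) = fun w => Fv c r (nsq w) := by
    funext w; rw [habs w]; rfl
  have ht1 : nsq z < 1 := by rw [← habs]; nlinarith [norm_nonneg z]
  have ht0 : r ^ 2 ≤ nsq z := by
    rw [← habs]; nlinarith [norm_nonneg z]
  rw [hfun, habs z, lap_u ht1]
  set t := nsq z with htdef
  have hre2 : z.re ^ 2 + z.im ^ 2 = t := by rw [htdef, nsq]; ring
  have hs : (0:ℝ) < 1 - t := by linarith
  have hr2 : (0:ℝ) < r ^ 2 := by positivity
  have hE : (0:ℝ) < Real.exp ((1 - t) / r ^ 2) := Real.exp_pos _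
  have hP : (0:ℝ) < (1 - t) ^ (c / 2 - 2) := Real.rpow_pos_of_pos hs _
  -- rewrite rpow's
  have k1 : (1 - t) ^ (c / 2 - 1) = (1 - t) ^ (c / 2 - 2) * (1 - t) := by
    rw [← Real.rpow_add_one hs.ne' (c / 2 - 2)]; congr 1; ring
  have k2 : (1 - t) ^ (c / 2) = (1 - t) ^ (c / 2 - 2) * (1 - t) ^ (2:ℕ) := by
    rw [← Real.rpow_natCast (1 - t) 2, ← Real.rpow_add hs]; norm_num
  have hRHS : (2 * Fv1 c r t + 4 * z.re ^ 2 * Fv2 c r t) +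
        (2 * Fv1 c r t + 4 * z.im ^ 2 * Fv2 c r t)
      = 4 * Fv1 c r t + 4 * t * Fv2 c r t := by
    rw [← hre2]; ring
  rw [hRHS, Fv1, Fv2, k1]
  set q : ℝ := 1 / r ^ 2 with hqdef
  have hq0 : 0 < q := by positivity
  have hdiv : ∀ x : ℝ, x / r ^ 2 = x * q := by
    intro x; rw [hqdef]; field_simp
  simp only [hdiv]
  set P := (1 - t) ^ (c / 2 - 2) with hPdef
  set E := Real.exp ((1 - t) * q) with hEdef
  have hq1 : (1:ℝ) ≤ t * q := by
    rw [hqdef, mul_one_div, le_div_iff₀ hr2]; linarith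
  have hE' : (0:ℝ) < E := Real.exp_pos _
  have hPE : (0:ℝ) < P * E := mul_pos hP hE'
  have hL : 2 * c / (1 - t) ^ 2 * ((1 - t) ^ (c / 2) * E) = (P * E) * (2 * c) := by
    rw [k2]
    have h2 : ((1 - t):ℝ) ^ (2:ℕ) = (1 - t) ^ (2:ℕ) := rfl
    field_simp
  rw [hL]
  have key : 2 * c ≤ 4 * (-((1 - t) * (c / 2 + (1 - t) * q)) +
      t * ((c / 2 - 1) * (c / 2 + (1 - t) * q) +
        (1 - t) * q * (c / 2 + (1 - t) * q) + (1 - t) * q)) := by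
    have hc0 : (0:ℝ) ≤ c := by linarith
    have ht' : (0:ℝ) ≤ t := by nlinarith
    have h1 : (0:ℝ) ≤ t * q - 1 := by linarith
    have t1 : 0 ≤ c * t * (c - 4) :=
      mul_nonneg (mul_nonneg hc0 ht') (by linarith)
    have t2 : 0 ≤ 4 * c * (1 - t) * (t * q - 1) :=
      mul_nonneg (mul_nonneg (mul_nonneg (by norm_num) hc0) hs.le) h1
    have t3 : 0 ≤ 4 * (1 - t) ^ 2 * q * (t * q - 1) :=
      mul_nonneg (mul_nonneg (by positivity) hq0.le) h1
    nlinarith [t1, t2, t3]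
  calc (P * E) * (2 * c) ≤ (P * E) * (4 * (-((1 - t) * (c / 2 + (1 - t) * q)) +
      t * ((c / 2 - 1) * (c / 2 + (1 - t) * q) +
        (1 - t) * q * (c / 2 + (1 - t) * q) + (1 - t) * q))) :=
      mul_le_mul_of_nonneg_left key hPE.le
    _ = 4 * -(P * (1 - t) * E * (c / 2 + (1 - t) * q)) +
        4 * t * (P * E * ((c / 2 - 1) * (c / 2 + (1 - t) * q) +
          (1 - t) * q * (c / 2 + (1 - t) * q) + (1 - t) * q)) := by ring
end
end
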